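/- arXiv:2202.05793 — 5 statements merged into one kernel-verified Lean document; each statement's English description precedes it below -/
import Mathlib

section
/- Let P = ⟨D,Γ,Δ⟩ be a planning problem in the action language B whose action theory (D,Γ) is consistent, and let Π(P,n) be its standard ASP encoding with horizon n. Then s0 a0 s1 ... a_{n−1} s_n is a trajectory of D with s0 the initial state of (D,Γ) and Δ ⊆ s_n if and only if there exists an answer set M of Π(P,n) such that occ(a_i,i) ∈ M for every i ∈ {0,...,n−1} and s_i = {ℓ | ℓ a fluent literal, holds(ℓ,i) ∈ M} for every i ∈ {0,...,n}. -/
/- # Action language B -/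

/-- A fluent literal: a fluent or its negation. -/
inductive Lit (F : Type) where
  | pos : F → Lit F
  | neg : F → Lit F

namespace Lit
/-- The complement of a fluent literal. -/
def compl {F : Type} : Lit F → Lit F
  | .pos f => .neg f
  | .neg f => .pos f
end Lit

/-- A set of fluent literals is consistent if it contains no fluent together with
its negation. -/
def ConsistentLits {F : Type} (s : Set (Lit F)) : Prop :=
  ∀ f : F, ¬ (Lit.pos f ∈ s ∧ Lit.neg f ∈ s)

/-- A set of fluent literals is complete if it contains each fluent or its negation. -/
def CompleteLits {F : Type} (s : Set (Lit F)) : Prop :=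
  ∀ f : F, Lit.pos f ∈ s ∨ Lit.neg f ∈ s

/-- A static causal law `caused(prem, concl)`. -/
structure StaticLaw (F : Type) where
  prem : Set (Lit F)
  concl : Lit F

/-- A dynamic causal law `causes(act, concl, prem)`. -/
structure DynamicLaw (F A : Type) where
  act : A
  concl : Lit F
  prem : Set (Lit F)

/-- An executability condition `executable(act, prem)`. -/
structure ExecLaw (F A : Type) where
  act : A
  prem : Set (Lit F)

/-- A domain in the action language B. -/
structure BDomain (F A : Type) where
  statics : Set (StaticLaw F)
  dynamics : Set (DynamicLaw F A)
  execs : Set (ExecLaw F A)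

/-- `v` is closed under the set `K` of static causal laws. -/
def ClosedUnder {F : Type} (K : Set (StaticLaw F)) (v : Set (Lit F)) : Prop :=
  ∀ r ∈ K, r.prem ⊆ v → r.concl ∈ v

/-- `IsCl K u v`: `v` is the least consistent set of literals containing `u`
and closed under `K`. -/
def IsCl {F : Type} (K : Set (StaticLaw F)) (u v : Set (Lit F)) : Prop :=
  u ⊆ v ∧ ConsistentLits v ∧ ClosedUnder K v ∧
    ∀ w, u ⊆ w → ConsistentLits w → ClosedUnder K w → v ⊆ w

/-- A state: a maximal (complete) consistent set of fluent literals closed under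
the static causal laws. -/
def IsState {F A : Type} (D : BDomain F A) (s : Set (Lit F)) : Prop :=
  CompleteLits s ∧ ConsistentLits s ∧ ClosedUnder D.statics s

/-- Action `a` is executable in `s`. -/
def Executable {F A : Type} (D : BDomain F A) (a : A) (s : Set (Lit F)) : Prop :=
  ∃ e ∈ D.execs, e.act = a ∧ e.prem ⊆ s

/-- The direct effects `e(a,s)` of action `a` in `s`. -/
def directEffects {F A : Type} (D : BDomain F A) (a : A) (s : Set (Lit F)) : Set (Lit F) :=
  { l | ∃ d ∈ D.dynamics, d.act = a ∧ d.concl = l ∧ d.prem ⊆ s }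

/-- The transition function `Φ` of a domain. -/
def Phi {F A : Type} (D : BDomain F A) (a : A) (s : Set (Lit F)) : Set (Set (Lit F)) :=
  { s' | Executable D a s ∧ IsState D s' ∧
      IsCl D.statics (directEffects D a s ∪ (s ∩ s')) s' }

/-- A planning problem `⟨D, Γ, Δ⟩`; `init` is the set of literals `f` with
`initially(f) ∈ Γ`, and `goal` is `Δ`. -/
structure PlanningProblem (F A : Type) where
  dom : BDomain F A
  init : Set (Lit F)
  goal : Set (Lit F)

/-- The action theory `(D,Γ)` is consistent: `Φ(a,s) ≠ ∅` whenever `a` is executable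
in state `s`, and the initial state is a state. -/
def ConsistentTheory {F A : Type} (P : PlanningProblem F A) : Prop :=
  (∀ (a : A) (s : Set (Lit F)), IsState P.dom s → Executable P.dom a s →
      (Phi P.dom a s).Nonempty) ∧
  IsState P.dom P.init

/-- `s0 a0 s1 ... a_{n-1} s_n` is a trajectory. -/
def IsTrajectory {F A : Type} (D : BDomain F A) (n : ℕ)
    (ss : ℕ → Set (Lit F)) (acts : ℕ → A) : Prop :=
  IsState D (ss 0) ∧ ∀ i < n, ss (i + 1) ∈ Phi D (acts i) (ss i)

/- # Answer set programming -/

/-- A normal rule (`head = none` gives a constraint). -/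
structure NRule (At : Type) where
  head : Option At
  pos : Set At
  neg : Set At

/-- A cardinality-1 choice rule `1{choices}1 ← pos, not neg`. -/
structure CRule (At : Type) where
  choices : Set At
  pos : Set At
  neg : Set At

/-- A program: normal rules (and constraints) plus choice rules. -/
structure Program (At : Type) where
  normals : Set (NRule At)
  choiceRules : Set (CRule At)

/-- `X` is closed under the Gelfond–Lifschitz reduct of `P` w.r.t. `M`. The reduct
contains `h ← pos` for every normal rule with head `h` whose negative body is
disjoint from `M`, and `a ← pos` for every choice rule with negative body disjoint
from `M` and every chosen atom `a ∈ M`. -/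
def ReductClosed {At : Type} (P : Program At) (M X : Set At) : Prop :=
  (∀ r ∈ P.normals, r.neg ∩ M = ∅ → r.pos ⊆ X → ∀ h, r.head = some h → h ∈ X) ∧
  (∀ c ∈ P.choiceRules, c.neg ∩ M = ∅ → c.pos ⊆ X → ∀ a ∈ c.choices, a ∈ M → a ∈ X)

/-- `M` satisfies all constraints of `P`. -/
def SatConstraints {At : Type} (P : Program At) (M : Set At) : Prop :=
  ∀ r ∈ P.normals, r.head = none → ¬ (r.pos ⊆ M ∧ r.neg ∩ M = ∅)

/-- `M` satisfies the choice rules of `P`: when the body holds, exactly one chosen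
atom is in `M`. -/
def SatChoices {At : Type} (P : Program At) (M : Set At) : Prop :=
  ∀ c ∈ P.choiceRules, c.pos ⊆ M → c.neg ∩ M = ∅ → ∃! a, a ∈ c.choices ∧ a ∈ M

/-- `M` is an answer set (stable model) of `P`: it satisfies constraints and choice
rules and is the least model of the reduct of `P` w.r.t. `M`. -/
def AnswerSet {At : Type} (P : Program At) (M : Set At) : Prop :=
  SatConstraints P M ∧ SatChoices P M ∧ ReductClosed P M M ∧
    ∀ X, ReductClosed P M X → M ⊆ X

/- # The encoding Π(P,n) -/

/-- Atoms of the program `Π(P,n)`. -/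
inductive PAtom (F A : Type) where
  | holds : Lit F → ℕ → PAtom F A
  | occ : A → ℕ → PAtom F A
  | possible : A → ℕ → PAtom F A
  | goal : PAtom F A

/-- `holds(φ,t)`: the set of atoms `holds(l,t)` for `l ∈ φ`. -/
def holdsSet {F A : Type} (φ : Set (Lit F)) (t : ℕ) : Set (PAtom F A) :=
  { x | ∃ l ∈ φ, x = PAtom.holds l t }

/-- The standard ASP encoding `Π(P,n)` of a planning problem with horizon `n`. -/
def PiProgram {F A : Type} (P : PlanningProblem F A) (n : ℕ) : Program (PAtom F A) where
  normals :=
    -- facts holds(f,0) for initially(f) ∈ Γ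
    { r | ∃ l ∈ P.init, r = ⟨some (PAtom.holds l 0), ∅, ∅⟩ } ∪
    -- possible(a,T) ← holds(φ,T)
    { r | ∃ e ∈ P.dom.execs, ∃ t ≤ n,
        r = ⟨some (PAtom.possible e.act t), holdsSet e.prem t, ∅⟩ } ∪
    -- holds(f,T+1) ← occ(a,T), holds(φ,T)
    { r | ∃ d ∈ P.dom.dynamics, ∃ t < n,
        r = ⟨some (PAtom.holds d.concl (t + 1)),
             insert (PAtom.occ d.act t) (holdsSet d.prem t), ∅⟩ } ∪
    -- holds(f,T) ← holds(φ,T)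
    { r | ∃ sl ∈ P.dom.statics, ∃ t ≤ n,
        r = ⟨some (PAtom.holds sl.concl t), holdsSet sl.prem t, ∅⟩ } ∪
    -- ← occ(A,T), not possible(A,T)
    { r | ∃ (a : A), ∃ t < n,
        r = ⟨none, {PAtom.occ a t}, {PAtom.possible a t}⟩ } ∪
    -- inertia
    { r | ∃ (l : Lit F), ∃ t < n,
        r = ⟨some (PAtom.holds l (t + 1)), {PAtom.holds l t},
             {PAtom.holds l.compl (t + 1)}⟩ } ∪
    -- ← holds(F,T), holds(¬F,T)
    { r | ∃ (f : F), ∃ t ≤ n,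
        r = ⟨none, {PAtom.holds (Lit.pos f) t, PAtom.holds (Lit.neg f) t}, ∅⟩ } ∪
    -- goal ← holds(Δ,n)  and  ← not goal
    { ⟨some PAtom.goal, holdsSet P.goal n, ∅⟩,
      ⟨none, ∅, {PAtom.goal}⟩ }
  choiceRules :=
    -- 1{occ(A,T) : action(A)}1 for T < n
    { c | ∃ t < n, c = ⟨{ x | ∃ a : A, x = PAtom.occ a t }, ∅, ∅⟩ }

/-!
Both directions compare an answer set `M` with the sequence of its slices
`M_t = {ℓ | holds(ℓ,t) ∈ M}`.

From a trajectory one builds the model containing `holds(ℓ,t)` for `ℓ ∈ s_t`, `occ(a_t,t)`,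
`possible(a,t)` for `a` executable in `s_t`, and `goal`. It satisfies the reduct, and it is the
least model of the reduct: for a reduct-closed `X`, by induction on `t`, the literals `ℓ ∈ s_{t+1}`
with `holds(ℓ,t+1) ∈ X` form a consistent set closed under the static laws and containing
`e(a_t,s_t) ∪ (s_t ∩ s_{t+1})`, hence all of `s_{t+1} = Cl(e(a_t,s_t) ∪ (s_t ∩ s_{t+1}))`.

Conversely, minimality of an answer set is an induction principle over the rules of `Π(P,n)`.
By this principle, `M_{t+1}` lies in every set that is closed under the static laws and contains
`e(a_t,M_t) ∪ (M_t ∩ M_{t+1})`, so `M_{t+1}` is that closure. The constraints give consistency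
and executability, the inertia rules give completeness, and the goal constraint gives `Δ ⊆ M_n`.
-/

section Literals

variable {F : Type} {s t : Set (Lit F)} {l : Lit F}

theorem ConsistentLits.mono (h : ConsistentLits t) (hst : s ⊆ t) : ConsistentLits s :=
  fun f hf => h f ⟨hst hf.1, hst hf.2⟩

theorem ConsistentLits.compl_not_mem (h : ConsistentLits s) (hl : l ∈ s) : l.compl ∉ s := by
  cases l with
  | pos f => exact fun hc => h f ⟨hl, hc⟩
  | neg f => exact fun hc => h f ⟨hc, hl⟩

theorem CompleteLits.mem_of_compl_not_mem (h : CompleteLits s) (hl : l.compl ∉ s) : l ∈ s := by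
  cases l with
  | pos f => exact (h f).resolve_right hl
  | neg f => exact (h f).resolve_left hl

end Literals

section Trajectory

variable {F A : Type} {D : BDomain F A} {n : ℕ} {ss ss' : ℕ → Set (Lit F)} {acts : ℕ → A}

theorem IsTrajectory.isState (h : IsTrajectory D n ss acts) : ∀ i ≤ n, IsState D (ss i)
  | 0, _ => h.1
  | i + 1, hi => (h.2 i hi).2.1

theorem IsTrajectory.congr (h : IsTrajectory D n ss acts) (hss : ∀ i ≤ n, ss i = ss' i) :
    IsTrajectory D n ss' acts := by
  refine ⟨hss 0 (Nat.zero_le n) ▸ h.1, fun i hi => ?_⟩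
  rw [← hss i hi.le, ← hss (i + 1) hi]
  exact h.2 i hi

end Trajectory

namespace AnswerSet

variable {At : Type} {P : Program At} {M : Set At}

theorem head_mem (hM : AnswerSet P M) {r : NRule At} (hr : r ∈ P.normals)
    (hneg : r.neg ∩ M = ∅) (hpos : r.pos ⊆ M) {h : At} (hh : r.head = some h) : h ∈ M :=
  hM.2.2.1.1 r hr hneg hpos h hh

theorem induction (hM : AnswerSet P M) (Q : At → Prop)
    (normal : ∀ r ∈ P.normals, r.neg ∩ M = ∅ → (∀ x ∈ r.pos, x ∈ M ∧ Q x) →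
      ∀ h, r.head = some h → Q h)
    (choice : ∀ c ∈ P.choiceRules, c.neg ∩ M = ∅ → (∀ x ∈ c.pos, x ∈ M ∧ Q x) →
      ∀ a ∈ c.choices, a ∈ M → Q a) :
    ∀ x ∈ M, Q x := by
  have hclosed : ReductClosed P M {x | x ∈ M ∧ Q x} :=
    ⟨fun r hr hneg hpos h hh =>
      ⟨hM.head_mem hr hneg (fun x hx => (hpos hx).1) hh, normal r hr hneg hpos h hh⟩,
     fun c hc hneg hpos a ha haM => ⟨haM, choice c hc hneg hpos a ha haM⟩⟩
  exact fun x hx => (hM.2.2.2 _ hclosed hx).2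

theorem supported (hM : AnswerSet P M) {x : At} (hx : x ∈ M) :
    (∃ r ∈ P.normals, r.head = some x ∧ r.pos ⊆ M ∧ r.neg ∩ M = ∅) ∨
      (∃ c ∈ P.choiceRules, x ∈ c.choices ∧ c.pos ⊆ M ∧ c.neg ∩ M = ∅) := by
  refine hM.induction (fun x => (∃ r ∈ P.normals, r.head = some x ∧ r.pos ⊆ M ∧ r.neg ∩ M = ∅) ∨
    (∃ c ∈ P.choiceRules, x ∈ c.choices ∧ c.pos ⊆ M ∧ c.neg ∩ M = ∅)) ?_ ?_ x hx
  · intro r hr hneg hpos h hh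
    exact .inl ⟨r, hr, hh, fun y hy => (hpos y hy).1, hneg⟩
  · intro c hc hneg hpos a ha _
    exact .inr ⟨c, hc, ha, fun y hy => (hpos y hy).1, hneg⟩

end AnswerSet

def slice {F A : Type} (M : Set (PAtom F A)) (t : ℕ) : Set (Lit F) :=
  { l | PAtom.holds l t ∈ M }

namespace PiProgram

variable {F A : Type} {P : PlanningProblem F A} {n : ℕ}

theorem mem_normals_iff {r : NRule (PAtom F A)} :
    r ∈ (PiProgram P n).normals ↔
      (∃ l ∈ P.init, r = ⟨some (PAtom.holds l 0), ∅, ∅⟩) ∨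
      (∃ e ∈ P.dom.execs, ∃ t ≤ n,
        r = ⟨some (PAtom.possible e.act t), holdsSet e.prem t, ∅⟩) ∨
      (∃ d ∈ P.dom.dynamics, ∃ t < n,
        r = ⟨some (PAtom.holds d.concl (t + 1)),
             insert (PAtom.occ d.act t) (holdsSet d.prem t), ∅⟩) ∨
      (∃ sl ∈ P.dom.statics, ∃ t ≤ n,
        r = ⟨some (PAtom.holds sl.concl t), holdsSet sl.prem t, ∅⟩) ∨
      (∃ a : A, ∃ t < n, r = ⟨none, {PAtom.occ a t}, {PAtom.possible a t}⟩) ∨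
      (∃ l : Lit F, ∃ t < n,
        r = ⟨some (PAtom.holds l (t + 1)), {PAtom.holds l t},
             {PAtom.holds l.compl (t + 1)}⟩) ∨
      (∃ f : F, ∃ t ≤ n,
        r = ⟨none, {PAtom.holds (Lit.pos f) t, PAtom.holds (Lit.neg f) t}, ∅⟩) ∨
      r = ⟨some PAtom.goal, holdsSet P.goal n, ∅⟩ ∨
      r = ⟨none, ∅, {PAtom.goal}⟩ := by
  simp only [PiProgram, Set.mem_union, Set.mem_ofPred_eq, Set.mem_insert_iff,
    Set.mem_singleton_iff, or_assoc]

theorem fact_mem {l : Lit F} (hl : l ∈ P.init) :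
    (⟨some (PAtom.holds l 0), ∅, ∅⟩ : NRule (PAtom F A)) ∈ (PiProgram P n).normals :=
  mem_normals_iff.mpr <| .inl ⟨l, hl, rfl⟩

theorem possible_rule_mem {e : ExecLaw F A} (he : e ∈ P.dom.execs) {t : ℕ} (ht : t ≤ n) :
    (⟨some (PAtom.possible e.act t), holdsSet e.prem t, ∅⟩ : NRule (PAtom F A)) ∈
      (PiProgram P n).normals :=
  mem_normals_iff.mpr <| .inr <| .inl ⟨e, he, t, ht, rfl⟩

theorem dynamic_rule_mem {d : DynamicLaw F A} (hd : d ∈ P.dom.dynamics) {t : ℕ} (ht : t < n) :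
    (⟨some (PAtom.holds d.concl (t + 1)), insert (PAtom.occ d.act t) (holdsSet d.prem t), ∅⟩ :
      NRule (PAtom F A)) ∈ (PiProgram P n).normals :=
  mem_normals_iff.mpr <| .inr <| .inr <| .inl ⟨d, hd, t, ht, rfl⟩

theorem static_rule_mem {sl : StaticLaw F} (hsl : sl ∈ P.dom.statics) {t : ℕ} (ht : t ≤ n) :
    (⟨some (PAtom.holds sl.concl t), holdsSet sl.prem t, ∅⟩ : NRule (PAtom F A)) ∈
      (PiProgram P n).normals :=
  mem_normals_iff.mpr <| .inr <| .inr <| .inr <| .inl ⟨sl, hsl, t, ht, rfl⟩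

theorem occ_constraint_mem (a : A) {t : ℕ} (ht : t < n) :
    (⟨none, {PAtom.occ a t}, {PAtom.possible a t}⟩ : NRule (PAtom F A)) ∈
      (PiProgram P n).normals :=
  mem_normals_iff.mpr <| .inr <| .inr <| .inr <| .inr <| .inl ⟨a, t, ht, rfl⟩

theorem inertia_rule_mem (l : Lit F) {t : ℕ} (ht : t < n) :
    (⟨some (PAtom.holds l (t + 1)), {PAtom.holds l t}, {PAtom.holds l.compl (t + 1)}⟩ :
      NRule (PAtom F A)) ∈ (PiProgram P n).normals :=
  mem_normals_iff.mpr <| .inr <| .inr <| .inr <| .inr <| .inr <| .inl ⟨l, t, ht, rfl⟩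

theorem consistency_constraint_mem (f : F) {t : ℕ} (ht : t ≤ n) :
    (⟨none, {PAtom.holds (Lit.pos f) t, PAtom.holds (Lit.neg f) t}, ∅⟩ : NRule (PAtom F A)) ∈
      (PiProgram P n).normals :=
  mem_normals_iff.mpr <| .inr <| .inr <| .inr <| .inr <| .inr <| .inr <| .inl ⟨f, t, ht, rfl⟩

theorem goal_rule_mem :
    (⟨some PAtom.goal, holdsSet P.goal n, ∅⟩ : NRule (PAtom F A)) ∈ (PiProgram P n).normals :=
  mem_normals_iff.mpr <| .inr <| .inr <| .inr <| .inr <| .inr <| .inr <| .inr <| .inl rfl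

theorem goal_constraint_mem :
    (⟨none, ∅, {PAtom.goal}⟩ : NRule (PAtom F A)) ∈ (PiProgram P n).normals :=
  mem_normals_iff.mpr <| .inr <| .inr <| .inr <| .inr <| .inr <| .inr <| .inr <| .inr rfl

theorem choice_rule_mem {t : ℕ} (ht : t < n) :
    (⟨{ x | ∃ a : A, x = PAtom.occ a t }, ∅, ∅⟩ : CRule (PAtom F A)) ∈
      (PiProgram P n).choiceRules :=
  ⟨t, ht, rfl⟩

section AnswerSet

variable {M : Set (PAtom F A)} {a : A} {t : ℕ} {l : Lit F}

theorem occ_eq_of_mem (hM : AnswerSet (PiProgram P n) M) {b : A} (ht : t < n)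
    (ha : PAtom.occ a t ∈ M) (hb : PAtom.occ b t ∈ M) : a = b := by
  obtain ⟨x, -, hx⟩ := hM.2.1 _ (choice_rule_mem ht) (Set.empty_subset M) (Set.empty_inter M)
  exact (PAtom.occ.inj ((hx _ ⟨⟨a, rfl⟩, ha⟩).trans (hx _ ⟨⟨b, rfl⟩, hb⟩).symm)).1

theorem possible_mem_of_occ_mem (hM : AnswerSet (PiProgram P n) M) (ht : t < n)
    (ha : PAtom.occ a t ∈ M) : PAtom.possible a t ∈ M := by
  by_contra hp
  exact hM.1 _ (occ_constraint_mem a ht) rfl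
    ⟨Set.singleton_subset_iff.mpr ha, Set.singleton_inter_eq_empty.mpr hp⟩

theorem executable_of_possible_mem (hM : AnswerSet (PiProgram P n) M)
    (hp : PAtom.possible a t ∈ M) : Executable P.dom a (slice M t) := by
  obtain ⟨r, hr, hhead, hpos, -⟩ | ⟨c, ⟨t', -, rfl⟩, ⟨a', hc⟩, -⟩ := hM.supported hp
  · rcases mem_normals_iff.mp hr with ⟨l, hl, rfl⟩ | ⟨e, he, t', ht', rfl⟩ |
      ⟨d, hd, t', ht', rfl⟩ | ⟨sl, hsl, t', ht', rfl⟩ | ⟨a', t', ht', rfl⟩ |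
      ⟨l, t', ht', rfl⟩ | ⟨f, t', ht', rfl⟩ | rfl | rfl <;> cases hhead
    exact ⟨e, he, rfl, fun l hl => hpos ⟨l, hl, rfl⟩⟩
  · cases hc

theorem goal_subset_slice (hM : AnswerSet (PiProgram P n) M) : P.goal ⊆ slice M n := by
  have hgoal : PAtom.goal ∈ M := by
    by_contra hg
    exact hM.1 _ goal_constraint_mem rfl
      ⟨Set.empty_subset M, Set.singleton_inter_eq_empty.mpr hg⟩
  obtain ⟨r, hr, hhead, hpos, -⟩ | ⟨c, ⟨t', -, rfl⟩, ⟨a', hc⟩, -⟩ := hM.supported hgoal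
  · rcases mem_normals_iff.mp hr with ⟨l, hl, rfl⟩ | ⟨e, he, t', ht', rfl⟩ |
      ⟨d, hd, t', ht', rfl⟩ | ⟨sl, hsl, t', ht', rfl⟩ | ⟨a', t', ht', rfl⟩ |
      ⟨l, t', ht', rfl⟩ | ⟨f, t', ht', rfl⟩ | rfl | rfl <;> cases hhead
    exact fun l hl => hpos ⟨l, hl, rfl⟩
  · cases hc

theorem consistentLits_slice (hM : AnswerSet (PiProgram P n) M) (ht : t ≤ n) :
    ConsistentLits (slice M t) := fun f hf =>
  hM.1 _ (consistency_constraint_mem f ht) rfl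
    ⟨by rintro x (rfl | rfl); exacts [hf.1, hf.2], Set.empty_inter M⟩

theorem closedUnder_slice (hM : AnswerSet (PiProgram P n) M) (ht : t ≤ n) :
    ClosedUnder P.dom.statics (slice M t) := fun sl hsl hprem =>
  hM.head_mem (static_rule_mem hsl ht) (Set.empty_inter M)
    (by rintro x ⟨l, hl, rfl⟩; exact hprem hl) rfl

theorem mem_slice_succ_of_compl_not_mem (hM : AnswerSet (PiProgram P n) M) (ht : t < n)
    (hl : l ∈ slice M t) (hc : l.compl ∉ slice M (t + 1)) : l ∈ slice M (t + 1) :=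
  hM.head_mem (inertia_rule_mem l ht) (Set.singleton_inter_eq_empty.mpr hc)
    (Set.singleton_subset_iff.mpr hl) rfl

theorem completeLits_slice_succ (hM : AnswerSet (PiProgram P n) M) (ht : t < n)
    (hcomp : CompleteLits (slice M t)) : CompleteLits (slice M (t + 1)) := by
  intro f
  by_contra! h
  rcases hcomp f with hp | hn
  · exact h.1 (mem_slice_succ_of_compl_not_mem hM ht hp h.2)
  · exact h.2 (mem_slice_succ_of_compl_not_mem hM ht hn h.1)

theorem directEffects_subset_slice_succ (hM : AnswerSet (PiProgram P n) M) (ht : t < n)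
    (ha : PAtom.occ a t ∈ M) : directEffects P.dom a (slice M t) ⊆ slice M (t + 1) := by
  rintro _ ⟨d, hd, rfl, rfl, hprem⟩
  refine hM.head_mem (dynamic_rule_mem hd ht) (Set.empty_inter M) ?_ rfl
  rintro x (rfl | ⟨l, hl, rfl⟩)
  exacts [ha, hprem hl]

theorem holds_induction (hM : AnswerSet (PiProgram P n) M) (R : Lit F → ℕ → Prop)
    (fact : ∀ l ∈ P.init, R l 0)
    (dynamic : ∀ d ∈ P.dom.dynamics, ∀ t < n, PAtom.occ d.act t ∈ M →
      (∀ l ∈ d.prem, l ∈ slice M t ∧ R l t) → R d.concl (t + 1))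
    (static : ∀ sl ∈ P.dom.statics, ∀ t ≤ n,
      (∀ l ∈ sl.prem, l ∈ slice M t ∧ R l t) → R sl.concl t)
    (inertia : ∀ l, ∀ t < n, l ∈ slice M t → R l t → l.compl ∉ slice M (t + 1) →
      R l (t + 1)) :
    ∀ t, ∀ l ∈ slice M t, R l t := by
  intro t l hl
  refine hM.induction (fun x => ∀ l t, x = .holds l t → R l t) ?_ ?_ _ hl l t rfl
  · intro r hr hneg hpos h hh
    rcases mem_normals_iff.mp hr with ⟨l, hl, rfl⟩ | ⟨e, he, t, ht, rfl⟩ |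
      ⟨d, hd, t, ht, rfl⟩ | ⟨sl, hsl, t, ht, rfl⟩ | ⟨a, t, ht, rfl⟩ |
      ⟨l, t, ht, rfl⟩ | ⟨f, t, ht, rfl⟩ | rfl | rfl <;> cases hh <;> rintro l' t' ⟨⟩
    · exact fact l hl
    · refine dynamic d hd t ht (hpos _ (Set.mem_insert _ _)).1 fun l hl => ?_
      have h := hpos _ (Set.mem_insert_of_mem _ ⟨l, hl, rfl⟩)
      exact ⟨h.1, h.2 l t rfl⟩
    · refine static sl hsl t ht fun l hl => ?_
      have h := hpos _ ⟨l, hl, rfl⟩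
      exact ⟨h.1, h.2 l t rfl⟩
    · have h := hpos _ (Set.mem_singleton _)
      exact inertia l t ht h.1 (h.2 l t rfl)
        fun hc => Set.singleton_inter_eq_empty.mp hneg hc
  · rintro c ⟨t, -, rfl⟩ - - x ⟨a, rfl⟩ - l t ⟨⟩

theorem slice_zero_eq_init (hM : AnswerSet (PiProgram P n) M)
    (hinit : ClosedUnder P.dom.statics P.init) : slice M 0 = P.init := by
  refine Set.Subset.antisymm (fun l hl => ?_) fun l hl =>
    hM.head_mem (fact_mem hl) (Set.empty_inter M) (Set.empty_subset M) rfl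
  refine holds_induction hM (fun l t => t = 0 → l ∈ P.init) ?_ ?_ ?_ ?_ 0 l hl rfl
  · exact fun l hl _ => hl
  · intro _ _ t _ _ _ h
    omega
  · rintro sl hsl t - hprem rfl
    exact hinit sl hsl fun m hm => (hprem m hm).2 rfl
  · intro _ t _ _ _ _ h
    omega

theorem slice_succ_subset (hM : AnswerSet (PiProgram P n) M) (ht : t < n)
    (ha : PAtom.occ a t ∈ M) {w : Set (Lit F)} (hw : ClosedUnder P.dom.statics w)
    (hbase : directEffects P.dom a (slice M t) ∪ (slice M t ∩ slice M (t + 1)) ⊆ w) :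
    slice M (t + 1) ⊆ w := by
  intro l hl
  refine holds_induction hM (fun l t' => t' = t + 1 → l ∈ w) ?_ ?_ ?_ ?_ (t + 1) l hl rfl
  · intro _ _ h
    omega
  · intro d hd t' _ hocc hprem h
    obtain rfl : t' = t := by omega
    obtain rfl := occ_eq_of_mem hM ht hocc ha
    exact hbase (.inl ⟨d, hd, rfl, rfl, fun m hm => (hprem m hm).1⟩)
  · rintro sl hsl t' - hprem rfl
    exact hw sl hsl fun m hm => (hprem m hm).2 rfl
  · intro m t' ht' hm _ hc h
    obtain rfl : t' = t := by omega
    exact hbase (.inr ⟨hm, mem_slice_succ_of_compl_not_mem hM ht' hm hc⟩)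

theorem isCl_slice_succ (hM : AnswerSet (PiProgram P n) M) (ht : t < n)
    (ha : PAtom.occ a t ∈ M) :
    IsCl P.dom.statics (directEffects P.dom a (slice M t) ∪ (slice M t ∩ slice M (t + 1)))
      (slice M (t + 1)) :=
  ⟨Set.union_subset (directEffects_subset_slice_succ hM ht ha) Set.inter_subset_right,
    consistentLits_slice hM ht, closedUnder_slice hM ht,
    fun _ hbase _ hw => slice_succ_subset hM ht ha hw hbase⟩

theorem slice_succ_mem_Phi (hM : AnswerSet (PiProgram P n) M) (ht : t < n)
    (ha : PAtom.occ a t ∈ M) (hs : IsState P.dom (slice M t)) :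
    slice M (t + 1) ∈ Phi P.dom a (slice M t) :=
  ⟨executable_of_possible_mem hM (possible_mem_of_occ_mem hM ht ha),
    ⟨completeLits_slice_succ hM ht hs.1, consistentLits_slice hM ht, closedUnder_slice hM ht⟩,
    isCl_slice_succ hM ht ha⟩

theorem isTrajectory_slice (hM : AnswerSet (PiProgram P n) M) (hinit : IsState P.dom P.init)
    {acts : ℕ → A} (hocc : ∀ t < n, PAtom.occ (acts t) t ∈ M) :
    IsTrajectory P.dom n (slice M) acts := by
  have hstate : ∀ t ≤ n, IsState P.dom (slice M t) := by
    intro t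
    induction t with
    | zero => exact fun _ => slice_zero_eq_init hM hinit.2.2 ▸ hinit
    | succ t ih => exact fun ht => (slice_succ_mem_Phi hM ht (hocc t ht) (ih (by omega))).2.1
  exact ⟨hstate 0 (Nat.zero_le n),
    fun t ht => slice_succ_mem_Phi hM ht (hocc t ht) (hstate t ht.le)⟩

end AnswerSet

end PiProgram

def trajectoryModel {F A : Type} (D : BDomain F A) (n : ℕ) (ss : ℕ → Set (Lit F))
    (acts : ℕ → A) : Set (PAtom F A) := fun x =>
  match x with
  | .holds l t => t ≤ n ∧ l ∈ ss t
  | .occ a t => t < n ∧ a = acts t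
  | .possible a t => t ≤ n ∧ Executable D a (ss t)
  | .goal => True

section TrajectoryModel

variable {F A : Type} {P : PlanningProblem F A} {n : ℕ} {ss : ℕ → Set (Lit F)} {acts : ℕ → A}

open PiProgram

theorem slice_trajectoryModel {t : ℕ} (ht : t ≤ n) :
    slice (trajectoryModel P.dom n ss acts) t = ss t := by
  ext l
  exact and_iff_right ht

theorem satConstraints_trajectoryModel (htraj : IsTrajectory P.dom n ss acts) :
    SatConstraints (PiProgram P n) (trajectoryModel P.dom n ss acts) := by
  rintro r hr hhead ⟨hpos, hneg⟩
  rcases mem_normals_iff.mp hr with ⟨l, hl, rfl⟩ | ⟨e, he, t, ht, rfl⟩ |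
    ⟨d, hd, t, ht, rfl⟩ | ⟨sl, hsl, t, ht, rfl⟩ | ⟨a, t, ht, rfl⟩ |
    ⟨l, t, ht, rfl⟩ | ⟨f, t, ht, rfl⟩ | rfl | rfl <;> cases hhead
  · obtain ⟨-, rfl⟩ : t < n ∧ a = acts t := hpos rfl
    exact Set.singleton_inter_eq_empty.mp hneg ⟨ht.le, (htraj.2 t ht).1⟩
  · exact (htraj.isState t ht).2.1 f
      ⟨(hpos (Set.mem_insert _ _)).2, (hpos (Set.mem_insert_of_mem _ rfl)).2⟩
  · exact Set.singleton_inter_eq_empty.mp hneg trivial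

theorem satChoices_trajectoryModel :
    SatChoices (PiProgram P n) (trajectoryModel P.dom n ss acts) := by
  rintro c ⟨t, ht, rfl⟩ - -
  refine ⟨.occ (acts t) t, ⟨⟨acts t, rfl⟩, ht, rfl⟩, ?_⟩
  rintro x ⟨⟨a, rfl⟩, -, rfl⟩
  rfl

theorem reductClosed_trajectoryModel (htraj : IsTrajectory P.dom n ss acts)
    (h0 : P.init ⊆ ss 0) :
    ReductClosed (PiProgram P n) (trajectoryModel P.dom n ss acts)
      (trajectoryModel P.dom n ss acts) := by
  refine ⟨fun r hr hneg hpos h hh => ?_, fun _ _ _ _ _ _ ha => ha⟩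
  rcases mem_normals_iff.mp hr with ⟨l, hl, rfl⟩ | ⟨e, he, t, ht, rfl⟩ |
    ⟨d, hd, t, ht, rfl⟩ | ⟨sl, hsl, t, ht, rfl⟩ | ⟨a, t, ht, rfl⟩ |
    ⟨l, t, ht, rfl⟩ | ⟨f, t, ht, rfl⟩ | rfl | rfl <;> cases hh
  · exact ⟨Nat.zero_le n, h0 hl⟩
  · exact ⟨ht, e, he, rfl, fun l hl => (hpos ⟨l, hl, rfl⟩).2⟩
  · have hprem : d.prem ⊆ ss t := fun l hl => (hpos (Set.mem_insert_of_mem _ ⟨l, hl, rfl⟩)).2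
    exact ⟨ht, (htraj.2 t ht).2.2.1 (.inl ⟨d, hd, (hpos (Set.mem_insert _ _)).2, rfl, hprem⟩)⟩
  · exact ⟨ht, (htraj.isState t ht).2.2 sl hsl fun l hl => (hpos ⟨l, hl, rfl⟩).2⟩
  · have hc : l.compl ∉ ss (t + 1) := fun hc => Set.singleton_inter_eq_empty.mp hneg ⟨ht, hc⟩
    exact ⟨ht, (htraj.isState (t + 1) ht).1.mem_of_compl_not_mem hc⟩
  · trivial

section Minimality

variable {X : Set (PAtom F A)}

theorem occ_mem_of_reductClosed
    (hX : ReductClosed (PiProgram P n) (trajectoryModel P.dom n ss acts) X) {t : ℕ} (ht : t < n) :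
    PAtom.occ (acts t) t ∈ X :=
  hX.2 _ (choice_rule_mem ht) (Set.empty_inter _) (Set.empty_subset X) _ ⟨acts t, rfl⟩ ⟨ht, rfl⟩

theorem holds_mem_of_reductClosed
    (hX : ReductClosed (PiProgram P n) (trajectoryModel P.dom n ss acts) X)
    (htraj : IsTrajectory P.dom n ss acts) (h0 : ss 0 ⊆ P.init) :
    ∀ t ≤ n, ∀ l ∈ ss t, PAtom.holds l t ∈ X
  | 0, _, l, hl => hX.1 _ (fact_mem (h0 hl)) (Set.empty_inter _) (Set.empty_subset X) _ rfl
  | t + 1, ht, l, hl => by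
    have ih := holds_mem_of_reductClosed hX htraj h0 t (by omega)
    obtain ⟨-, hstate, hbase, -, -, hmin⟩ := htraj.2 t ht
    suffices ss (t + 1) ⊆ {m | PAtom.holds m (t + 1) ∈ X} ∩ ss (t + 1) from (this hl).1
    refine hmin _ ?_ (hstate.2.1.mono Set.inter_subset_right) fun sl hsl hprem => ⟨?_, ?_⟩
    · rintro m (⟨d, hd, hact, rfl, hprem⟩ | ⟨hm, hm'⟩)
      · refine ⟨hX.1 _ (dynamic_rule_mem hd ht) (Set.empty_inter _) ?_ _ rfl,
          hbase (.inl ⟨d, hd, hact, rfl, hprem⟩)⟩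
        rintro _ (rfl | ⟨l, hl, rfl⟩)
        exacts [hact ▸ occ_mem_of_reductClosed hX ht, ih l (hprem hl)]
      · refine ⟨hX.1 _ (inertia_rule_mem m ht) ?_ (Set.singleton_subset_iff.mpr (ih m hm)) _ rfl,
          hm'⟩
        exact Set.singleton_inter_eq_empty.mpr fun hc => hstate.2.1.compl_not_mem hm' hc.2
    · refine hX.1 _ (static_rule_mem hsl ht) (Set.empty_inter _) ?_ _ rfl
      rintro _ ⟨l, hl, rfl⟩
      exact (hprem hl).1
    · exact hstate.2.2 sl hsl fun l hl => (hprem hl).2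

theorem trajectoryModel_subset_of_reductClosed
    (hX : ReductClosed (PiProgram P n) (trajectoryModel P.dom n ss acts) X)
    (htraj : IsTrajectory P.dom n ss acts) (h0 : ss 0 ⊆ P.init) (hgoal : P.goal ⊆ ss n) :
    trajectoryModel P.dom n ss acts ⊆ X := by
  have hholds := holds_mem_of_reductClosed hX htraj h0
  rintro (⟨l, t⟩ | ⟨a, t⟩ | ⟨a, t⟩ | _) hx
  · exact hholds t hx.1 l hx.2
  · obtain ⟨ht, rfl⟩ := hx
    exact occ_mem_of_reductClosed hX ht
  · obtain ⟨ht, e, he, rfl, hprem⟩ := hx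
    refine hX.1 _ (possible_rule_mem he ht) (Set.empty_inter _) ?_ _ rfl
    rintro _ ⟨l, hl, rfl⟩
    exact hholds t ht l (hprem hl)
  · refine hX.1 _ goal_rule_mem (Set.empty_inter _) ?_ _ rfl
    rintro _ ⟨l, hl, rfl⟩
    exact hholds n le_rfl l (hgoal hl)

end Minimality

theorem answerSet_trajectoryModel (htraj : IsTrajectory P.dom n ss acts) (h0 : ss 0 = P.init)
    (hgoal : P.goal ⊆ ss n) : AnswerSet (PiProgram P n) (trajectoryModel P.dom n ss acts) :=
  ⟨satConstraints_trajectoryModel htraj, satChoices_trajectoryModel,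
    reductClosed_trajectoryModel htraj h0.superset,
    fun _ hX => trajectoryModel_subset_of_reductClosed hX htraj h0.subset hgoal⟩

end TrajectoryModel

/-- **Theorem 1** (correctness of `Π(P,n)`): trajectories achieving the goal from the
initial state correspond exactly to answer sets of `Π(P,n)`. -/
theorem answer_set_planning_correctness {F A : Type}
    (P : PlanningProblem F A) (n : ℕ) (hcons : ConsistentTheory P)
    (ss : ℕ → Set (Lit F)) (acts : ℕ → A) :
    (IsTrajectory P.dom n ss acts ∧ ss 0 = P.init ∧ P.goal ⊆ ss n) ↔
    (∃ M : Set (PAtom F A), AnswerSet (PiProgram P n) M ∧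
        (∀ i < n, PAtom.occ (acts i) i ∈ M) ∧
        (∀ i ≤ n, ss i = { l | PAtom.holds l i ∈ M })) := by
  constructor
  · rintro ⟨htraj, h0, hgoal⟩
    exact ⟨trajectoryModel P.dom n ss acts, answerSet_trajectoryModel htraj h0 hgoal,
      fun i hi => ⟨hi, rfl⟩, fun i hi => (slice_trajectoryModel hi).symm⟩
  · rintro ⟨M, hM, hocc, hss⟩
    have h0 : ss 0 = P.init :=
      (hss 0 (Nat.zero_le n)).trans (PiProgram.slice_zero_eq_init hM hcons.2.2.2)
    refine ⟨(PiProgram.isTrajectory_slice hM hcons.2 hocc).congr fun i hi => (hss i hi).symm,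
      h0, ?_⟩
    rw [hss n le_rfl]
    exact PiProgram.goal_subset_slice hM
end

section
/- Let D be a diagnosis domain (with consistent action theory), H_n a recorded history up to step n whose initial situation is complete, i.e., for every fluent f either obs(f,0) ∈ H_n or obs(¬f,0) ∈ H_n. Then M is a model of H_n if and only if M is defined by some answer set X of Π(D,H_n), i.e., M is the trajectory s0 a0 ... a_{n−1} s_n with s_t = {ℓ | holds(ℓ,t) ∈ X} and a_t = {a | occ(a,t) ∈ X}. -/
/- # Diagnosis: compound actions, histories, and the program Π(D,H_n) -/

/-- Direct effects of a compound action (a set of elementary actions): the union of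
the members' direct effects. -/
def directEffectsC {F A : Type} (D : BDomain F A) (a : Set A) (s : Set (Lit F)) :
    Set (Lit F) :=
  { l | ∃ d ∈ D.dynamics, d.act ∈ a ∧ d.concl = l ∧ d.prem ⊆ s }

/-- A compound action is executable if all of its members are. -/
def ExecutableC {F A : Type} (D : BDomain F A) (a : Set A) (s : Set (Lit F)) : Prop :=
  ∀ b ∈ a, Executable D b s

/-- The transition function extended to compound actions. -/
def PhiC {F A : Type} (D : BDomain F A) (a : Set A) (s : Set (Lit F)) :
    Set (Set (Lit F)) :=
  { s' | ExecutableC D a s ∧ IsState D s' ∧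
      IsCl D.statics (directEffectsC D a s ∪ (s ∩ s')) s' }

/-- The action theory of `D` (for compound actions) is consistent. -/
def ConsistentTheoryC {F A : Type} (D : BDomain F A) : Prop :=
  ∀ (a : Set A) (s : Set (Lit F)), IsState D s → ExecutableC D a s →
    (PhiC D a s).Nonempty

/-- A set of observations: atoms `obs(l,t)` and `hpd(a,t)`. -/
structure ObsSet (F A : Type) where
  obs : Set (Lit F × ℕ)
  hpd : Set (A × ℕ)

/-- Union of two sets of observations. -/
def ObsSet.union {F A : Type} (H O : ObsSet F A) : ObsSet F A :=
  ⟨H.obs ∪ O.obs, H.hpd ∪ O.hpd⟩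

/-- `H` is a recorded history up to step `n`: observations at steps `≤ n` and action
occurrences at steps `< n`. -/
def ObsSet.UpTo {F A : Type} (H : ObsSet F A) (n : ℕ) : Prop :=
  (∀ p ∈ H.obs, p.2 ≤ n) ∧ (∀ p ∈ H.hpd, p.2 < n)

/-- The trajectory `s0 a0 ... a_{n-1} s_n` (of states and compound actions) is a
model of the set of observations `H` with horizon `n`. -/
def IsModelOf {F A : Type} (D : BDomain F A) (H : ObsSet F A) (n : ℕ)
    (ss : ℕ → Set (Lit F)) (acts : ℕ → Set A) : Prop :=
  IsState D (ss 0) ∧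
  (∀ t < n, acts t = { a | (a, t) ∈ H.hpd } ∧ ss (t + 1) ∈ PhiC D (acts t) (ss t)) ∧
  (∀ (l : Lit F) (t : ℕ), (l, t) ∈ H.obs → t ≤ n → l ∈ ss t)

/-- `H` (with horizon `n`) is consistent, i.e., has a model. -/
def HasModel {F A : Type} (D : BDomain F A) (H : ObsSet F A) (n : ℕ) : Prop :=
  ∃ ss acts, IsModelOf D H n ss acts

/-- Atoms of the program `Π(D,H_n)`. -/
inductive DAtom (F A : Type) where
  | holds : Lit F → ℕ → DAtom F A
  | occ : A → ℕ → DAtom F A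
  | possible : A → ℕ → DAtom F A
  | obs : Lit F → ℕ → DAtom F A
  | hpd : A → ℕ → DAtom F A

/-- `holds(φ,t)` as a set of atoms. -/
def holdsSetD {F A : Type} (φ : Set (Lit F)) (t : ℕ) : Set (DAtom F A) :=
  { x | ∃ l ∈ φ, x = DAtom.holds l t }

/-- The program `Π(D,H)` with horizon `n`: domain-dependent rules, inertia,
state consistency, the linking rules `occ(A,T) ← hpd(A,T)` and
`holds(L,0) ← obs(L,0)`, the reality-check constraint, and the facts of `H`. -/
def PiDiag {F A : Type} (D : BDomain F A) (H : ObsSet F A) (n : ℕ) :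
    Program (DAtom F A) where
  normals :=
    -- facts of H
    { r | ∃ p ∈ H.obs, r = ⟨some (DAtom.obs p.1 p.2), ∅, ∅⟩ } ∪
    { r | ∃ p ∈ H.hpd, r = ⟨some (DAtom.hpd p.1 p.2), ∅, ∅⟩ } ∪
    -- possible(a,T) ← holds(φ,T)
    { r | ∃ e ∈ D.execs, ∃ t ≤ n,
        r = ⟨some (DAtom.possible e.act t), holdsSetD e.prem t, ∅⟩ } ∪
    -- holds(f,T+1) ← occ(a,T), holds(φ,T)
    { r | ∃ d ∈ D.dynamics, ∃ t < n,
        r = ⟨some (DAtom.holds d.concl (t + 1)),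
             insert (DAtom.occ d.act t) (holdsSetD d.prem t), ∅⟩ } ∪
    -- holds(f,T) ← holds(φ,T)
    { r | ∃ sl ∈ D.statics, ∃ t ≤ n,
        r = ⟨some (DAtom.holds sl.concl t), holdsSetD sl.prem t, ∅⟩ } ∪
    -- ← occ(A,T), not possible(A,T)
    { r | ∃ (a : A), ∃ t < n,
        r = ⟨none, {DAtom.occ a t}, {DAtom.possible a t}⟩ } ∪
    -- inertia
    { r | ∃ (l : Lit F), ∃ t < n,
        r = ⟨some (DAtom.holds l (t + 1)), {DAtom.holds l t},
             {DAtom.holds l.compl (t + 1)}⟩ } ∪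
    -- ← holds(F,T), holds(¬F,T)
    { r | ∃ (f : F), ∃ t ≤ n,
        r = ⟨none, {DAtom.holds (Lit.pos f) t, DAtom.holds (Lit.neg f) t}, ∅⟩ } ∪
    -- occ(A,T) ← hpd(A,T)
    { r | ∃ (a : A), ∃ t < n,
        r = ⟨some (DAtom.occ a t), {DAtom.hpd a t}, ∅⟩ } ∪
    -- holds(L,0) ← obs(L,0)
    { r | ∃ (l : Lit F),
        r = ⟨some (DAtom.holds l 0), {DAtom.obs l 0}, ∅⟩ } ∪
    -- reality check: ← obs(L,T), not holds(L,T)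
    { r | ∃ (l : Lit F), ∃ t ≤ n,
        r = ⟨none, {DAtom.obs l t}, {DAtom.holds l t}⟩ }
  choiceRules := ∅

namespace DiagAux

variable {F A : Type}

lemma compl_notMem {s : Set (Lit F)} (hc : ConsistentLits s) {l : Lit F}
    (hl : l ∈ s) : l.compl ∉ s := by
  cases l with
  | pos f => exact fun h => hc f ⟨hl, h⟩
  | neg f => exact fun h => hc f ⟨h, hl⟩

lemma compl_mem {s : Set (Lit F)} (hc : CompleteLits s) {l : Lit F}
    (hl : l ∉ s) : l.compl ∈ s := by
  cases l with
  | pos f => exact (hc f).resolve_left hl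
  | neg f => exact (hc f).resolve_right hl

lemma holdsSetD_subset {φ : Set (Lit F)} {t : ℕ} {X : Set (DAtom F A)} :
    holdsSetD φ t ⊆ X ↔ ∀ l ∈ φ, DAtom.holds l t ∈ X := by
  constructor
  · intro h l hl; exact h ⟨l, hl, rfl⟩
  · rintro h x ⟨l, hl, rfl⟩; exact h l hl

/-- Characterization of `ReductClosed` for `PiDiag`. -/
def RC (D : BDomain F A) (H : ObsSet F A) (n : ℕ) (M X : Set (DAtom F A)) : Prop :=
  (∀ p ∈ H.obs, (DAtom.obs p.1 p.2 : DAtom F A) ∈ X) ∧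
  (∀ p ∈ H.hpd, (DAtom.hpd p.1 p.2 : DAtom F A) ∈ X) ∧
  (∀ e ∈ D.execs, ∀ t ≤ n, (∀ l ∈ e.prem, DAtom.holds l t ∈ X) →
      DAtom.possible e.act t ∈ X) ∧
  (∀ d ∈ D.dynamics, ∀ t < n, DAtom.occ d.act t ∈ X →
      (∀ l ∈ d.prem, DAtom.holds l t ∈ X) → DAtom.holds d.concl (t+1) ∈ X) ∧
  (∀ sl ∈ D.statics, ∀ t ≤ n, (∀ l ∈ sl.prem, DAtom.holds l t ∈ X) →
      DAtom.holds sl.concl t ∈ X) ∧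
  (∀ (l : Lit F), ∀ t < n, DAtom.holds l.compl (t+1) ∉ M →
      DAtom.holds l t ∈ X → DAtom.holds l (t+1) ∈ X) ∧
  (∀ (a : A), ∀ t < n, DAtom.hpd a t ∈ X → DAtom.occ a t ∈ X) ∧
  (∀ (l : Lit F), DAtom.obs l 0 ∈ X → DAtom.holds l 0 ∈ X)

lemma mem_normals_iff {D : BDomain F A} {H : ObsSet F A} {n : ℕ}
    (r : NRule (DAtom F A)) : r ∈ (PiDiag D H n).normals ↔
    ((∃ p ∈ H.obs, r = ⟨some (DAtom.obs p.1 p.2), ∅, ∅⟩) ∨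
     (∃ p ∈ H.hpd, r = ⟨some (DAtom.hpd p.1 p.2), ∅, ∅⟩) ∨
     (∃ e ∈ D.execs, ∃ t ≤ n,
        r = ⟨some (DAtom.possible e.act t), holdsSetD e.prem t, ∅⟩) ∨
     (∃ d ∈ D.dynamics, ∃ t < n,
        r = ⟨some (DAtom.holds d.concl (t + 1)),
             insert (DAtom.occ d.act t) (holdsSetD d.prem t), ∅⟩) ∨
     (∃ sl ∈ D.statics, ∃ t ≤ n,
        r = ⟨some (DAtom.holds sl.concl t), holdsSetD sl.prem t, ∅⟩) ∨
     (∃ (a : A), ∃ t < n,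
        r = ⟨none, {DAtom.occ a t}, {DAtom.possible a t}⟩) ∨
     (∃ (l : Lit F), ∃ t < n,
        r = ⟨some (DAtom.holds l (t + 1)), {DAtom.holds l t},
             {DAtom.holds l.compl (t + 1)}⟩) ∨
     (∃ (f : F), ∃ t ≤ n,
        r = ⟨none, {DAtom.holds (Lit.pos f) t, DAtom.holds (Lit.neg f) t}, ∅⟩) ∨
     (∃ (a : A), ∃ t < n,
        r = ⟨some (DAtom.occ a t), {DAtom.hpd a t}, ∅⟩) ∨
     (∃ (l : Lit F),
        r = ⟨some (DAtom.holds l 0), {DAtom.obs l 0}, ∅⟩) ∨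
     (∃ (l : Lit F), ∃ t ≤ n,
        r = ⟨none, {DAtom.obs l t}, {DAtom.holds l t}⟩)) := by
  show r ∈ _ ∪ _ ↔ _
  simp only [Set.mem_union, Set.mem_setOf_eq, or_assoc]

end DiagAux
namespace DiagAux

variable {F A : Type} {D : BDomain F A} {H : ObsSet F A} {n : ℕ}

lemma singleton_inter_empty {x : DAtom F A} {M : Set (DAtom F A)}
    (h : ({x} : Set (DAtom F A)) ∩ M = ∅) : x ∉ M := fun hx =>
  Set.eq_empty_iff_forall_notMem.mp h x ⟨rfl, hx⟩

lemma reductClosed_iff {M X : Set (DAtom F A)} :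
    ReductClosed (PiDiag D H n) M X ↔ RC D H n M X := by
  constructor
  · intro ⟨hn, _⟩
    refine ⟨?_, ?_, ?_, ?_, ?_, ?_, ?_, ?_⟩
    · intro p hp
      exact hn _ ((mem_normals_iff _).mpr (Or.inl ⟨p, hp, rfl⟩))
        (Set.empty_inter M) (Set.empty_subset X) _ rfl
    · intro p hp
      exact hn _ ((mem_normals_iff _).mpr (Or.inr (Or.inl ⟨p, hp, rfl⟩)))
        (Set.empty_inter M) (Set.empty_subset X) _ rfl
    · intro e he t ht hb
      exact hn _ ((mem_normals_iff _).mpr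
          (Or.inr (Or.inr (Or.inl ⟨e, he, t, ht, rfl⟩))))
        (Set.empty_inter M) (holdsSetD_subset.mpr hb) _ rfl
    · intro d hd t ht ho hb
      refine hn _ ((mem_normals_iff _).mpr
          (Or.inr (Or.inr (Or.inr (Or.inl ⟨d, hd, t, ht, rfl⟩)))))
        (Set.empty_inter M) ?_ _ rfl
      exact Set.insert_subset ho (holdsSetD_subset.mpr hb)
    · intro sl hsl t ht hb
      exact hn _ ((mem_normals_iff _).mpr
          (Or.inr (Or.inr (Or.inr (Or.inr (Or.inl ⟨sl, hsl, t, ht, rfl⟩))))))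
        (Set.empty_inter M) (holdsSetD_subset.mpr hb) _ rfl
    · intro l t ht hnm hb
      refine hn _ ((mem_normals_iff _).mpr
          (Or.inr (Or.inr (Or.inr (Or.inr (Or.inr (Or.inr (Or.inl
            ⟨l, t, ht, rfl⟩))))))))
        ?_ (Set.singleton_subset_iff.mpr hb) _ rfl
      exact Set.singleton_inter_eq_empty.mpr hnm
    · intro a t ht hb
      exact hn _ ((mem_normals_iff _).mpr
          (Or.inr (Or.inr (Or.inr (Or.inr (Or.inr (Or.inr (Or.inr (Or.inr
            (Or.inl ⟨a, t, ht, rfl⟩))))))))))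
        (Set.empty_inter M) (Set.singleton_subset_iff.mpr hb) _ rfl
    · intro l hb
      exact hn _ ((mem_normals_iff _).mpr
          (Or.inr (Or.inr (Or.inr (Or.inr (Or.inr (Or.inr (Or.inr (Or.inr
            (Or.inr (Or.inl ⟨l, rfl⟩)))))))))))
        (Set.empty_inter M) (Set.singleton_subset_iff.mpr hb) _ rfl
  · rintro ⟨x1, x2, x3, x4, x5, x6, x7, x8⟩
    constructor
    · intro r hr hneg hpos h hh
      rcases (mem_normals_iff r).mp hr with
        ⟨p, hp, rfl⟩ | ⟨p, hp, rfl⟩ | ⟨e, he, t, ht, rfl⟩ | ⟨d, hd, t, ht, rfl⟩ |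
        ⟨sl, hsl, t, ht, rfl⟩ | ⟨a, t, ht, rfl⟩ | ⟨l, t, ht, rfl⟩ |
        ⟨f, t, ht, rfl⟩ | ⟨a, t, ht, rfl⟩ | ⟨l, rfl⟩ | ⟨l, t, ht, rfl⟩
      · cases hh; exact x1 p hp
      · cases hh; exact x2 p hp
      · cases hh; exact x3 e he t ht (holdsSetD_subset.mp hpos)
      · cases hh
        rw [Set.insert_subset_iff] at hpos
        exact x4 d hd t ht hpos.1 (holdsSetD_subset.mp hpos.2)
      · cases hh; exact x5 sl hsl t ht (holdsSetD_subset.mp hpos)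
      · cases hh
      · cases hh
        exact x6 l t ht (singleton_inter_empty hneg)
          (hpos (Set.mem_singleton _))
      · cases hh
      · cases hh; exact x7 a t ht (hpos (Set.mem_singleton _))
      · cases hh; exact x8 l (hpos (Set.mem_singleton _))
      · cases hh
    · intro c hc; exact hc.elim

/-- Characterization of `SatConstraints` for `PiDiag`. -/
def SC (D : BDomain F A) (H : ObsSet F A) (n : ℕ) (M : Set (DAtom F A)) : Prop :=
  (∀ (a : A) (t : ℕ), t < n → DAtom.occ a t ∈ M → DAtom.possible a t ∈ M) ∧
  (∀ (f : F) (t : ℕ), t ≤ n →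
      ¬(DAtom.holds (Lit.pos f) t ∈ M ∧ DAtom.holds (Lit.neg f) t ∈ M)) ∧
  (∀ (l : Lit F) (t : ℕ), t ≤ n → DAtom.obs l t ∈ M → DAtom.holds l t ∈ M)

lemma satConstraints_iff {M : Set (DAtom F A)} :
    SatConstraints (PiDiag D H n) M ↔ SC D H n M := by
  constructor
  · intro h
    refine ⟨?_, ?_, ?_⟩
    · intro a t ht ho
      by_contra hp
      exact h _ ((mem_normals_iff _).mpr
          (Or.inr (Or.inr (Or.inr (Or.inr (Or.inr (Or.inl ⟨a, t, ht, rfl⟩)))))))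
        rfl ⟨Set.singleton_subset_iff.mpr ho, Set.singleton_inter_eq_empty.mpr hp⟩
    · intro f t ht ⟨h1, h2⟩
      refine h _ ((mem_normals_iff _).mpr
          (Or.inr (Or.inr (Or.inr (Or.inr (Or.inr (Or.inr (Or.inr (Or.inl
            ⟨f, t, ht, rfl⟩)))))))))
        rfl ⟨?_, Set.empty_inter M⟩
      exact Set.insert_subset h1 (Set.singleton_subset_iff.mpr h2)
    · intro l t ht ho
      by_contra hl
      exact h _ ((mem_normals_iff _).mpr
          (Or.inr (Or.inr (Or.inr (Or.inr (Or.inr (Or.inr (Or.inr (Or.inr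
            (Or.inr (Or.inr ⟨l, t, ht, rfl⟩)))))))))))
        rfl ⟨Set.singleton_subset_iff.mpr ho, Set.singleton_inter_eq_empty.mpr hl⟩
  · rintro ⟨c1, c2, c3⟩ r hr hh ⟨hpos, hneg⟩
    rcases (mem_normals_iff r).mp hr with
      ⟨p, hp, rfl⟩ | ⟨p, hp, rfl⟩ | ⟨e, he, t, ht, rfl⟩ | ⟨d, hd, t, ht, rfl⟩ |
      ⟨sl, hsl, t, ht, rfl⟩ | ⟨a, t, ht, rfl⟩ | ⟨l, t, ht, rfl⟩ |
      ⟨f, t, ht, rfl⟩ | ⟨a, t, ht, rfl⟩ | ⟨l, rfl⟩ | ⟨l, t, ht, rfl⟩ <;>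
      try cases hh
    · exact singleton_inter_empty hneg
        (c1 a t ht (hpos (Set.mem_singleton _)))
    · rw [Set.insert_subset_iff, Set.singleton_subset_iff] at hpos
      exact c2 f t ht ⟨hpos.1, hpos.2⟩
    · exact singleton_inter_empty hneg
        (c3 l t ht (hpos (Set.mem_singleton _)))

lemma answerSet_iff {M : Set (DAtom F A)} :
    AnswerSet (PiDiag D H n) M ↔
      SC D H n M ∧ RC D H n M M ∧ ∀ X, RC D H n M X → M ⊆ X := by
  constructor
  · rintro ⟨h1, _, h3, h4⟩
    exact ⟨satConstraints_iff.mp h1, reductClosed_iff.mp h3,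
      fun X hX => h4 X (reductClosed_iff.mpr hX)⟩
  · rintro ⟨h1, h2, h3⟩
    exact ⟨satConstraints_iff.mpr h1, fun c hc => hc.elim,
      reductClosed_iff.mpr h2, fun X hX => h3 X (reductClosed_iff.mp hX)⟩

end DiagAux
namespace DiagAux

variable {F A : Type}

lemma phiC_elim {D : BDomain F A} {a : Set A} {s s' : Set (Lit F)}
    (h : s' ∈ PhiC D a s) : ExecutableC D a s ∧ IsState D s' ∧
      IsCl D.statics (directEffectsC D a s ∪ (s ∩ s')) s' := h

lemma phiC_intro {D : BDomain F A} {a : Set A} {s s' : Set (Lit F)}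
    (h : ExecutableC D a s ∧ IsState D s' ∧
      IsCl D.statics (directEffectsC D a s ∪ (s ∩ s')) s') : s' ∈ PhiC D a s := h

/-- The intended answer set built from a model. -/
def Mdl (D : BDomain F A) (H : ObsSet F A) (n : ℕ)
    (ss : ℕ → Set (Lit F)) : Set (DAtom F A) :=
  {x | match x with
    | .obs l t => (l, t) ∈ H.obs
    | .hpd a t => (a, t) ∈ H.hpd
    | .holds l t => t ≤ n ∧ l ∈ ss t
    | .occ a t => t < n ∧ (a, t) ∈ H.hpd
    | .possible a t => t ≤ n ∧ ∃ e ∈ D.execs, e.act = a ∧ e.prem ⊆ ss t}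

variable {D : BDomain F A} {H : ObsSet F A} {n : ℕ} {ss : ℕ → Set (Lit F)}

lemma mem_Mdl_holds {l : Lit F} {t : ℕ} :
    DAtom.holds l t ∈ Mdl D H n ss ↔ t ≤ n ∧ l ∈ ss t := Iff.rfl
lemma mem_Mdl_occ {a : A} {t : ℕ} :
    DAtom.occ a t ∈ Mdl D H n ss ↔ t < n ∧ (a, t) ∈ H.hpd := Iff.rfl
lemma mem_Mdl_obs {l : Lit F} {t : ℕ} :
    DAtom.obs l t ∈ Mdl D H n ss ↔ (l, t) ∈ H.obs := Iff.rfl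
lemma mem_Mdl_hpd {a : A} {t : ℕ} :
    DAtom.hpd a t ∈ Mdl D H n ss ↔ (a, t) ∈ H.hpd := Iff.rfl
lemma mem_Mdl_possible {a : A} {t : ℕ} :
    DAtom.possible a t ∈ Mdl D H n ss ↔
      t ≤ n ∧ ∃ e ∈ D.execs, e.act = a ∧ e.prem ⊆ ss t := Iff.rfl

theorem forward
    (hcomplete : ∀ f : F, (Lit.pos f, 0) ∈ H.obs ∨ (Lit.neg f, 0) ∈ H.obs)
    {acts : ℕ → Set A} (hm : IsModelOf D H n ss acts) :
    AnswerSet (PiDiag D H n) (Mdl D H n ss) := by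
  obtain ⟨hs0, hstep, hobs⟩ := hm
  have hstate : ∀ t, t ≤ n → IsState D (ss t) := by
    intro t
    induction t with
    | zero => intro _; exact hs0
    | succ t _ => intro ht; exact (phiC_elim (hstep t ht).2).2.1
  have hacts : ∀ t, t < n → acts t = {a | (a, t) ∈ H.hpd} := fun t ht =>
    (hstep t ht).1
  rw [answerSet_iff]
  refine ⟨⟨?_, ?_, ?_⟩, ⟨?_, ?_, ?_, ?_, ?_, ?_, ?_, ?_⟩, ?_⟩
  -- SC 1: occ → possible
  · intro a t ht ho
    rw [mem_Mdl_occ] at ho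
    have ha : a ∈ acts t := by rw [hacts t ht]; exact ho.2
    obtain ⟨e, he, heq, hsub⟩ := (phiC_elim (hstep t ht).2).1 a ha
    exact mem_Mdl_possible.mpr ⟨le_of_lt ht, e, he, heq, hsub⟩
  -- SC 2: state consistency
  · intro f t ht ⟨h1, h2⟩
    exact (hstate t ht).2.1 f ⟨(mem_Mdl_holds.mp h1).2, (mem_Mdl_holds.mp h2).2⟩
  -- SC 3: reality check
  · intro l t ht ho
    exact mem_Mdl_holds.mpr ⟨ht, hobs l t (mem_Mdl_obs.mp ho) ht⟩
  -- RC 1,2: facts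
  · intro p hp; exact mem_Mdl_obs.mpr (by rwa [Prod.mk.eta])
  · intro p hp; exact mem_Mdl_hpd.mpr (by rwa [Prod.mk.eta])
  -- RC 3: possible
  · intro e he t ht hb
    exact mem_Mdl_possible.mpr ⟨ht, e, he, rfl,
      fun l hl => (mem_Mdl_holds.mp (hb l hl)).2⟩
  -- RC 4: dynamic
  · intro d hd t ht ho hb
    rw [mem_Mdl_occ] at ho
    have hcl := (phiC_elim (hstep t ht).2).2.2
    refine mem_Mdl_holds.mpr ⟨ht, hcl.1 (Or.inl ⟨d, hd, ?_, rfl,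
      fun l hl => (mem_Mdl_holds.mp (hb l hl)).2⟩)⟩
    rw [hacts t ht]; exact ho.2
  -- RC 5: static
  · intro sl hsl t ht hb
    exact mem_Mdl_holds.mpr ⟨ht, (hstate t ht).2.2 sl hsl
      (fun l hl => (mem_Mdl_holds.mp (hb l hl)).2)⟩
  -- RC 6: inertia
  · intro l t ht hnm hb
    refine mem_Mdl_holds.mpr ⟨ht, ?_⟩
    by_contra hl
    exact hnm (mem_Mdl_holds.mpr ⟨ht, compl_mem (hstate (t+1) ht).1 hl⟩)
  -- RC 7: occ ← hpd
  · intro a t ht hb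
    exact mem_Mdl_occ.mpr ⟨ht, mem_Mdl_hpd.mp hb⟩
  -- RC 8: holds ← obs at 0
  · intro l hb
    exact mem_Mdl_holds.mpr ⟨Nat.zero_le n, hobs l 0 (mem_Mdl_obs.mp hb)
      (Nat.zero_le n)⟩
  -- minimality
  · rintro X ⟨x1, x2, x3, x4, x5, x6, x7, x8⟩
    have key : ∀ t, t ≤ n → ∀ l ∈ ss t, DAtom.holds l t ∈ X := by
      intro t
      induction t with
      | zero =>
        intro _ l hl
        have hlobs : (l, 0) ∈ H.obs := by
          cases l with
          | pos f =>
            refine (hcomplete f).resolve_right (fun h => ?_)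
            exact hs0.2.1 f ⟨hl, hobs _ 0 h (Nat.zero_le n)⟩
          | neg f =>
            refine (hcomplete f).resolve_left (fun h => ?_)
            exact hs0.2.1 f ⟨hobs _ 0 h (Nat.zero_le n), hl⟩
        exact x8 l (x1 (l, 0) hlobs)
      | succ t ih =>
        intro ht l hl
        have ht' : t < n := ht
        have hcl := (phiC_elim (hstep t ht').2).2.2
        have hsub : ss (t+1) ⊆
            {m | m ∈ ss (t+1) ∧ DAtom.holds m (t+1) ∈ X} := by
          refine hcl.2.2.2 _ ?_ ?_ ?_
          · rintro m (hm | hm)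
            · have hm' : m ∈ ss (t+1) := hcl.1 (Or.inl hm)
              obtain ⟨d, hd, hact, rfl, hprem⟩ := hm
              have hocc : DAtom.occ d.act t ∈ X := by
                refine x7 d.act t ht' (x2 (d.act, t) ?_)
                rw [hacts t ht'] at hact; exact hact
              exact ⟨hm', x4 d hd t ht' hocc
                (fun l' hl' => ih (le_of_lt ht') l' (hprem hl'))⟩
            · have hm' : m ∈ ss (t+1) := hcl.1 (Or.inr hm)
              refine ⟨hm', x6 m t ht' ?_ (ih (le_of_lt ht') m hm.1)⟩
              intro hmem
              exact compl_notMem (hstate (t+1) ht).2.1 hm'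
                (mem_Mdl_holds.mp hmem).2
          · intro f hf
            exact (hstate (t+1) ht).2.1 f ⟨hf.1.1, hf.2.1⟩
          · intro r hr hprem
            exact ⟨(hstate (t+1) ht).2.2 r hr (fun l' hl' => (hprem hl').1),
              x5 r hr (t+1) ht (fun l' hl' => (hprem hl').2)⟩
        exact (hsub hl).2
    intro x hx
    cases x with
    | holds l t => exact key t hx.1 l hx.2
    | occ a t => exact x7 a t hx.1 (x2 (a, t) hx.2)
    | obs l t => exact x1 (l, t) hx
    | hpd a t => exact x2 (a, t) hx
    | possible a t =>
      obtain ⟨ht, e, he, heq, hsub⟩ := hx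
      subst heq
      exact x3 e he t ht (fun l hl => key t ht l (hsub hl))

end DiagAux
namespace DiagAux

variable {F A : Type} {D : BDomain F A} {H : ObsSet F A} {n : ℕ}

theorem backward (hH : H.UpTo n)
    (hcomplete : ∀ f : F, (Lit.pos f, 0) ∈ H.obs ∨ (Lit.neg f, 0) ∈ H.obs)
    {X : Set (DAtom F A)} (hX : AnswerSet (PiDiag D H n) X) :
    IsModelOf D H n (fun t => {l | DAtom.holds l t ∈ X})
      (fun t => {a | DAtom.occ a t ∈ X}) := by
  obtain ⟨⟨c1, c2, c3⟩, ⟨x1, x2, x3, x4, x5, x6, x7, x8⟩, hmin⟩ :=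
    answerSet_iff.mp hX
  set sX : ℕ → Set (Lit F) := fun t => {l | DAtom.holds l t ∈ X} with hsX
  -- stripping spurious occ/possible/obs/hpd atoms
  have hgoodsub : X ⊆ X ∩ {x | match x with
      | DAtom.obs l t => (l, t) ∈ H.obs
      | DAtom.hpd a t => (a, t) ∈ H.hpd
      | DAtom.occ a t => (a, t) ∈ H.hpd
      | DAtom.possible a t => ∃ e ∈ D.execs, e.act = a ∧ e.prem ⊆ sX t
      | DAtom.holds _ _ => True} := by
    refine hmin _ ⟨?_, ?_, ?_, ?_, ?_, ?_, ?_, ?_⟩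
    · intro p hp
      exact ⟨x1 p hp, show (p.1, p.2) ∈ H.obs by rwa [Prod.mk.eta]⟩
    · intro p hp
      exact ⟨x2 p hp, show (p.1, p.2) ∈ H.hpd by rwa [Prod.mk.eta]⟩
    · intro e he t ht hb
      exact ⟨x3 e he t ht (fun l hl => (hb l hl).1),
        e, he, rfl, fun l hl => (hb l hl).1⟩
    · intro d hd t ht ho hb
      exact ⟨x4 d hd t ht ho.1 (fun l hl => (hb l hl).1), trivial⟩
    · intro sl hsl t ht hb
      exact ⟨x5 sl hsl t ht (fun l hl => (hb l hl).1), trivial⟩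
    · intro l t ht hnm hb
      exact ⟨x6 l t ht hnm hb.1, trivial⟩
    · intro a t ht hb
      exact ⟨x7 a t ht hb.1, hb.2⟩
    · intro l hb
      exact ⟨x8 l hb.1, trivial⟩
  have hocc_hpd : ∀ (a : A) (t : ℕ), DAtom.occ a t ∈ X → (a, t) ∈ H.hpd :=
    fun a t h => (hgoodsub h).2
  have hposs : ∀ (a : A) (t : ℕ), DAtom.possible a t ∈ X →
      ∃ e ∈ D.execs, e.act = a ∧ e.prem ⊆ sX t :=
    fun a t h => (hgoodsub h).2
  -- state properties
  have hcons : ∀ t ≤ n, ConsistentLits (sX t) := fun t ht f hf =>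
    c2 f t ht ⟨hf.1, hf.2⟩
  have hclosed : ∀ t ≤ n, ClosedUnder D.statics (sX t) := fun t ht r hr hp =>
    x5 r hr t ht (fun l hl => hp hl)
  have hcompl : ∀ t, t ≤ n → CompleteLits (sX t) := by
    intro t
    induction t with
    | zero =>
      intro _ f
      rcases hcomplete f with h | h
      · exact Or.inl (x8 _ (x1 (Lit.pos f, 0) h))
      · exact Or.inr (x8 _ (x1 (Lit.neg f, 0) h))
    | succ t ih =>
      intro ht f
      by_cases h1 : DAtom.holds (Lit.pos f) (t+1) ∈ X
      · exact Or.inl h1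
      by_cases h2 : DAtom.holds (Lit.neg f) (t+1) ∈ X
      · exact Or.inr h2
      exfalso
      rcases ih (le_of_lt ht) f with h | h
      · exact h1 (x6 (Lit.pos f) t ht h2 h)
      · exact h2 (x6 (Lit.neg f) t ht h1 h)
  have hstate : ∀ t ≤ n, IsState D (sX t) :=
    fun t ht => ⟨hcompl t ht, hcons t ht, hclosed t ht⟩
  -- direct effects are in the next state
  have hE : ∀ t, t < n →
      directEffectsC D {a | DAtom.occ a t ∈ X} (sX t) ⊆ sX (t+1) := by
    rintro t ht l ⟨d, hd, hact, rfl, hprem⟩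
    exact x4 d hd t ht hact (fun l' hl' => hprem hl')
  -- minimality of the closure
  have hmin' : ∀ t, t < n → ∀ w,
      directEffectsC D {a | DAtom.occ a t ∈ X} (sX t) ∪ (sX t ∩ sX (t+1)) ⊆ w →
      ConsistentLits w → ClosedUnder D.statics w → sX (t+1) ⊆ w := by
    intro t ht w hw _ hwcl l hl
    have hX3 : X ⊆ {x | x ∈ X ∧ ∀ l' : Lit F,
        x = DAtom.holds l' (t+1) → l' ∈ w} := by
      refine hmin _ ⟨?_, ?_, ?_, ?_, ?_, ?_, ?_, ?_⟩
      · exact fun p hp => ⟨x1 p hp, fun l' h => by cases h⟩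
      · exact fun p hp => ⟨x2 p hp, fun l' h => by cases h⟩
      · exact fun e he t' ht' hb =>
          ⟨x3 e he t' ht' (fun l' hl' => (hb l' hl').1), fun l' h => by cases h⟩
      · intro d hd t' ht' ho hb
        have hd0 : DAtom.holds d.concl (t'+1) ∈ X :=
          x4 d hd t' ht' ho.1 (fun l' hl' => (hb l' hl').1)
        refine ⟨hd0, ?_⟩
        intro l' h
        injection h with h1 h2
        have htt : t' = t := by omega
        subst htt; subst h1
        refine hw (Or.inl ⟨d, hd, ho.1, rfl, fun l' hl' => (hb l' hl').1⟩)
      · intro sl hsl t' ht' hb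
        have hs0 : DAtom.holds sl.concl t' ∈ X :=
          x5 sl hsl t' ht' (fun l' hl' => (hb l' hl').1)
        refine ⟨hs0, ?_⟩
        intro l' h
        injection h with h1 h2
        subst h2; subst h1
        exact hwcl sl hsl (fun l' hl' => (hb l' hl').2 l' rfl)
      · intro l0 t' ht' hnm hb
        have hi0 : DAtom.holds l0 (t'+1) ∈ X := x6 l0 t' ht' hnm hb.1
        refine ⟨hi0, ?_⟩
        intro l' h
        injection h with h1 h2
        have htt : t' = t := by omega
        subst htt; subst h1
        exact hw (Or.inr ⟨hb.1, hi0⟩)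
      · exact fun a t' ht' hb => ⟨x7 a t' ht' hb.1, fun l' h => by cases h⟩
      · intro l0 hb
        refine ⟨x8 l0 hb.1, ?_⟩
        intro l' h
        injection h with h1 h2
        exact absurd h2 (by omega)
    exact (hX3 hl).2 l rfl
  -- assemble
  refine ⟨hstate 0 (Nat.zero_le n), ?_, ?_⟩
  · intro t ht
    constructor
    · ext a
      constructor
      · exact fun h => hocc_hpd a t h
      · exact fun h => x7 a t ht (x2 (a, t) h)
    · refine phiC_intro ⟨?_, hstate (t+1) ht, ?_, hcons (t+1) ht,
        hclosed (t+1) ht, hmin' t ht⟩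
      · intro a ha
        obtain ⟨e, he, heq, hsub⟩ := hposs a t (c1 a t ht ha)
        exact ⟨e, he, heq, hsub⟩
      · rintro l (h | h)
        · exact hE t ht h
        · exact h.2
  · intro l t hlt ht
    exact c3 l t ht (x1 (l, t) hlt)

end DiagAux
/-- **Models of a recorded history vs. answer sets of `Π(D,H_n)`**: if the initial
situation of `H_n` is complete, then the models of `H_n` are exactly the trajectories
defined by the answer sets of `Π(D,H_n)`. -/
theorem diagnosis_model_correspondence {F A : Type}
    (D : BDomain F A) (hdc : ConsistentTheoryC D)
    (H : ObsSet F A) (n : ℕ) (hH : H.UpTo n)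
    (hcomplete : ∀ f : F, (Lit.pos f, 0) ∈ H.obs ∨ (Lit.neg f, 0) ∈ H.obs)
    (ss : ℕ → Set (Lit F)) (acts : ℕ → Set A) :
    IsModelOf D H n ss acts ↔
      ∃ X : Set (DAtom F A), AnswerSet (PiDiag D H n) X ∧
        (∀ t ≤ n, ss t = { l | DAtom.holds l t ∈ X }) ∧
        (∀ t < n, acts t = { a | DAtom.occ a t ∈ X }) := by
  constructor
  · intro hm
    refine ⟨DiagAux.Mdl D H n ss, DiagAux.forward hcomplete hm, ?_, ?_⟩
    · intro t ht
      ext l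
      simp only [Set.mem_setOf_eq, DiagAux.mem_Mdl_holds]
      exact ⟨fun h => ⟨ht, h⟩, fun h => h.2⟩
    · intro t ht
      rw [(hm.2.1 t ht).1]
      ext a
      simp only [Set.mem_setOf_eq, DiagAux.mem_Mdl_occ]
      exact ⟨fun h => ⟨ht, h⟩, fun h => h.2⟩
  · rintro ⟨X, hX, hss, hacts⟩
    have hb := DiagAux.backward hH hcomplete hX
    refine ⟨?_, ?_, ?_⟩
    · rw [hss 0 (Nat.zero_le n)]; exact hb.1
    · intro t ht
      rw [hacts t ht, hss t (le_of_lt ht), hss (t+1) ht]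
      exact hb.2.1 t ht
    · intro l t h1 h2
      rw [hss t h2]
      exact hb.2.2 l t h1 h2
end

section
/- Let D be a diagnosis domain with consistent action theory and let S = ⟨H_n, O^m_n⟩ be a configuration where H_n is a consistent recorded history up to step n with complete initial situation and O^m_n is a set of observations between steps n and m ≥ n. Then S is a symptom (i.e., H_n ∪ O^m_n is inconsistent) if and only if the program TEST(S) = Π(D,H_n) ∪ O^m_n has no answer set. -/
/-- `O` is a set of observations between steps `n` and `m`. -/
def ObsSet.Between {F A : Type} (O : ObsSet F A) (n m : ℕ) : Prop :=
  (∀ p ∈ O.obs, n ≤ p.2 ∧ p.2 ≤ m) ∧ (∀ p ∈ O.hpd, n ≤ p.2 ∧ p.2 ≤ m)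

/-- The configuration `S = ⟨H_n, O^m_n⟩` is a symptom: `H_n` is consistent but
`H_n ∪ O^m_n` is not. -/
def IsSymptom {F A : Type} (D : BDomain F A) (H O : ObsSet F A) (n m : ℕ) : Prop :=
  HasModel D H n ∧ ¬ HasModel D (H.union O) m

/- # Auxiliary development for symptom detection -/

namespace SymptomAux

variable {F A : Type}

lemma lit_compl_compl (l : Lit F) : l.compl.compl = l := by cases l <;> rfl

lemma complete_mem {s : Set (Lit F)} (hc : CompleteLits s) {l : Lit F}
    (h : l.compl ∉ s) : l ∈ s := by
  rcases l with f | f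
  · rcases hc f with h1 | h1
    · exact h1
    · exact absurd h1 h
  · rcases hc f with h1 | h1
    · exact absurd h1 h
    · exact h1

lemma consistent_not_compl {s : Set (Lit F)} (hc : ConsistentLits s) {l : Lit F}
    (h : l ∈ s) : l.compl ∉ s := by
  rcases l with f | f
  · exact fun h2 => hc f ⟨h, h2⟩
  · exact fun h2 => hc f ⟨h2, h⟩

lemma consistent_subset {s t : Set (Lit F)} (h : s ⊆ t) (hc : ConsistentLits t) :
    ConsistentLits s := fun f hf => hc f ⟨h hf.1, h hf.2⟩

lemma holdsSetD_subset {φ : Set (Lit F)} {t : ℕ} {X : Set (DAtom F A)} :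
    holdsSetD φ t ⊆ X ↔ ∀ l ∈ φ, DAtom.holds l t ∈ X := by
  constructor
  · intro h l hl; exact h ⟨l, hl, rfl⟩
  · rintro h x ⟨l, hl, rfl⟩; exact h l hl

/-- Characterization of membership in the normal rules of `PiDiag`. -/
lemma mem_normals_iff {D : BDomain F A} {S : ObsSet F A} {m : ℕ}
    {r : NRule (DAtom F A)} :
    r ∈ (PiDiag D S m).normals ↔
      (∃ p ∈ S.obs, r = ⟨some (DAtom.obs p.1 p.2), ∅, ∅⟩) ∨
      (∃ p ∈ S.hpd, r = ⟨some (DAtom.hpd p.1 p.2), ∅, ∅⟩) ∨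
      (∃ e ∈ D.execs, ∃ t ≤ m,
        r = ⟨some (DAtom.possible e.act t), holdsSetD e.prem t, ∅⟩) ∨
      (∃ d ∈ D.dynamics, ∃ t < m,
        r = ⟨some (DAtom.holds d.concl (t + 1)),
             insert (DAtom.occ d.act t) (holdsSetD d.prem t), ∅⟩) ∨
      (∃ sl ∈ D.statics, ∃ t ≤ m,
        r = ⟨some (DAtom.holds sl.concl t), holdsSetD sl.prem t, ∅⟩) ∨
      (∃ (a : A), ∃ t < m,
        r = ⟨none, {DAtom.occ a t}, {DAtom.possible a t}⟩) ∨
      (∃ (l : Lit F), ∃ t < m,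
        r = ⟨some (DAtom.holds l (t + 1)), {DAtom.holds l t},
             {DAtom.holds l.compl (t + 1)}⟩) ∨
      (∃ (f : F), ∃ t ≤ m,
        r = ⟨none, {DAtom.holds (Lit.pos f) t, DAtom.holds (Lit.neg f) t}, ∅⟩) ∨
      (∃ (a : A), ∃ t < m,
        r = ⟨some (DAtom.occ a t), {DAtom.hpd a t}, ∅⟩) ∨
      (∃ (l : Lit F),
        r = ⟨some (DAtom.holds l 0), {DAtom.obs l 0}, ∅⟩) ∨
      (∃ (l : Lit F), ∃ t ≤ m,
        r = ⟨none, {DAtom.obs l t}, {DAtom.holds l t}⟩) := by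
  simp only [PiDiag, Set.mem_union, Set.mem_setOf_eq, or_assoc]

lemma no_choice {D : BDomain F A} {S : ObsSet F A} {m : ℕ}
    {c : CRule (DAtom F A)} (hc : c ∈ (PiDiag D S m).choiceRules) : False := hc

lemma reductClosed_inter {At : Type} {P : Program At} {M X : Set At}
    (h1 : ReductClosed P M X) (h2 : ReductClosed P M M) :
    ReductClosed P M (X ∩ M) := by
  constructor
  · intro r hr hneg hpos hd hh
    exact ⟨h1.1 r hr hneg (hpos.trans Set.inter_subset_left) hd hh,
           h2.1 r hr hneg (hpos.trans Set.inter_subset_right) hd hh⟩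
  · intro c hc hneg hpos a ha haM
    exact ⟨h1.2 c hc hneg (hpos.trans Set.inter_subset_left) a ha haM,
           h2.2 c hc hneg (hpos.trans Set.inter_subset_right) a ha haM⟩

/-- The intended answer set constructed from a trajectory. -/
def modelAS (D : BDomain F A) (S : ObsSet F A) (m : ℕ)
    (ss : ℕ → Set (Lit F)) : Set (DAtom F A) := fun x =>
  match x with
  | DAtom.obs l t => (l, t) ∈ S.obs
  | DAtom.hpd a t => (a, t) ∈ S.hpd
  | DAtom.occ a t => t < m ∧ (a, t) ∈ S.hpd
  | DAtom.possible a t => t ≤ m ∧ ∃ e ∈ D.execs, e.act = a ∧ e.prem ⊆ ss t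
  | DAtom.holds l t => t ≤ m ∧ l ∈ ss t

@[simp] lemma mem_modelAS_obs {D : BDomain F A} {S m ss l t} :
    DAtom.obs l t ∈ modelAS D S m ss ↔ (l, t) ∈ S.obs := Iff.rfl
@[simp] lemma mem_modelAS_hpd {D : BDomain F A} {S : ObsSet F A} {m ss} {a : A} {t} :
    DAtom.hpd a t ∈ modelAS D S m ss ↔ (a, t) ∈ S.hpd := Iff.rfl
@[simp] lemma mem_modelAS_occ {D : BDomain F A} {S : ObsSet F A} {m ss} {a : A} {t} :
    DAtom.occ a t ∈ modelAS D S m ss ↔ t < m ∧ (a, t) ∈ S.hpd := Iff.rfl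
@[simp] lemma mem_modelAS_possible {D : BDomain F A} {S : ObsSet F A} {m ss} {a : A} {t} :
    DAtom.possible a t ∈ modelAS D S m ss ↔
      t ≤ m ∧ ∃ e ∈ D.execs, e.act = a ∧ e.prem ⊆ ss t := Iff.rfl
@[simp] lemma mem_modelAS_holds {D : BDomain F A} {S : ObsSet F A} {m ss l t} :
    DAtom.holds l t ∈ modelAS D S m ss ↔ t ≤ m ∧ l ∈ ss t := Iff.rfl

section Rules
variable {D : BDomain F A} {S : ObsSet F A} {m : ℕ}

lemma ruleObsFact {p : Lit F × ℕ} (hp : p ∈ S.obs) :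
    (⟨some (DAtom.obs p.1 p.2), ∅, ∅⟩ : NRule (DAtom F A)) ∈ (PiDiag D S m).normals :=
  mem_normals_iff.mpr (Or.inl ⟨p, hp, rfl⟩)

lemma ruleHpdFact {p : A × ℕ} (hp : p ∈ S.hpd) :
    (⟨some (DAtom.hpd p.1 p.2), ∅, ∅⟩ : NRule (DAtom F A)) ∈ (PiDiag D S m).normals :=
  mem_normals_iff.mpr (Or.inr (Or.inl ⟨p, hp, rfl⟩))

lemma rulePoss {e : ExecLaw F A} (he : e ∈ D.execs) {t : ℕ} (ht : t ≤ m) :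
    (⟨some (DAtom.possible e.act t), holdsSetD e.prem t, ∅⟩ : NRule (DAtom F A)) ∈
      (PiDiag D S m).normals :=
  mem_normals_iff.mpr (Or.inr (Or.inr (Or.inl ⟨e, he, t, ht, rfl⟩)))

lemma ruleDyn {d : DynamicLaw F A} (hd : d ∈ D.dynamics) {t : ℕ} (ht : t < m) :
    (⟨some (DAtom.holds d.concl (t + 1)),
      insert (DAtom.occ d.act t) (holdsSetD d.prem t), ∅⟩ : NRule (DAtom F A)) ∈
      (PiDiag D S m).normals :=
  mem_normals_iff.mpr (Or.inr (Or.inr (Or.inr (Or.inl ⟨d, hd, t, ht, rfl⟩))))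

lemma ruleStat {sl : StaticLaw F} (hsl : sl ∈ D.statics) {t : ℕ} (ht : t ≤ m) :
    (⟨some (DAtom.holds sl.concl t), holdsSetD sl.prem t, ∅⟩ : NRule (DAtom F A)) ∈
      (PiDiag D S m).normals :=
  mem_normals_iff.mpr (Or.inr (Or.inr (Or.inr (Or.inr (Or.inl ⟨sl, hsl, t, ht, rfl⟩)))))

lemma ruleConOcc (a : A) {t : ℕ} (ht : t < m) :
    (⟨none, {DAtom.occ a t}, {DAtom.possible a t}⟩ : NRule (DAtom F A)) ∈
      (PiDiag D S m).normals :=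
  mem_normals_iff.mpr (Or.inr (Or.inr (Or.inr (Or.inr (Or.inr (Or.inl ⟨a, t, ht, rfl⟩))))))

lemma ruleInertia (l : Lit F) {t : ℕ} (ht : t < m) :
    (⟨some (DAtom.holds l (t + 1)), {DAtom.holds l t},
      {DAtom.holds l.compl (t + 1)}⟩ : NRule (DAtom F A)) ∈ (PiDiag D S m).normals :=
  mem_normals_iff.mpr
    (Or.inr (Or.inr (Or.inr (Or.inr (Or.inr (Or.inr (Or.inl ⟨l, t, ht, rfl⟩)))))))

lemma ruleConFl (f : F) {t : ℕ} (ht : t ≤ m) :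
    (⟨none, {DAtom.holds (Lit.pos f) t, DAtom.holds (Lit.neg f) t}, ∅⟩ :
      NRule (DAtom F A)) ∈ (PiDiag D S m).normals :=
  mem_normals_iff.mpr
    (Or.inr (Or.inr (Or.inr (Or.inr (Or.inr (Or.inr (Or.inr (Or.inl ⟨f, t, ht, rfl⟩))))))))

lemma ruleOcc (a : A) {t : ℕ} (ht : t < m) :
    (⟨some (DAtom.occ a t), {DAtom.hpd a t}, ∅⟩ : NRule (DAtom F A)) ∈
      (PiDiag D S m).normals :=
  mem_normals_iff.mpr
    (Or.inr (Or.inr (Or.inr (Or.inr (Or.inr (Or.inr (Or.inr (Or.inr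
      (Or.inl ⟨a, t, ht, rfl⟩)))))))))

lemma ruleInit (l : Lit F) :
    (⟨some (DAtom.holds l 0), {DAtom.obs l 0}, ∅⟩ : NRule (DAtom F A)) ∈
      (PiDiag D S m).normals :=
  mem_normals_iff.mpr
    (Or.inr (Or.inr (Or.inr (Or.inr (Or.inr (Or.inr (Or.inr (Or.inr (Or.inr
      (Or.inl ⟨l, rfl⟩))))))))))

lemma ruleReal (l : Lit F) {t : ℕ} (ht : t ≤ m) :
    (⟨none, {DAtom.obs l t}, {DAtom.holds l t}⟩ : NRule (DAtom F A)) ∈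
      (PiDiag D S m).normals :=
  mem_normals_iff.mpr
    (Or.inr (Or.inr (Or.inr (Or.inr (Or.inr (Or.inr (Or.inr (Or.inr (Or.inr
      (Or.inr ⟨l, t, ht, rfl⟩))))))))))

end Rules

theorem answerSet_of_model (D : BDomain F A) (S : ObsSet F A) (m : ℕ)
    (hcomp : ∀ f : F, (Lit.pos f, 0) ∈ S.obs ∨ (Lit.neg f, 0) ∈ S.obs)
    (h : HasModel D S m) :
    ∃ X, AnswerSet (PiDiag D S m) X := by
  obtain ⟨ss, acts, h0, htr, hob⟩ := h
  have hstate : ∀ t, t ≤ m → IsState D (ss t) := by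
    intro t ht
    cases t with
    | zero => exact h0
    | succ t =>
      have hPhi := (htr t (by omega)).2
      simp only [PhiC, Set.mem_setOf_eq] at hPhi
      exact hPhi.2.1
  set M : Set (DAtom F A) := modelAS D S m ss with hMdef
  -- M is closed under the reduct
  have hMM : ReductClosed (PiDiag D S m) M M := by
    constructor
    · intro r hr hneg hpos hd hdh
      rcases mem_normals_iff.mp hr with ⟨p, hp, rfl⟩ | ⟨p, hp, rfl⟩ |
        ⟨e, he, t, ht, rfl⟩ | ⟨d, hdyn, t, ht, rfl⟩ | ⟨sl, hsl, t, ht, rfl⟩ |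
        ⟨a, t, ht, rfl⟩ | ⟨l, t, ht, rfl⟩ | ⟨f, t, ht, rfl⟩ | ⟨a, t, ht, rfl⟩ |
        ⟨l, rfl⟩ | ⟨l, t, ht, rfl⟩
      · injection hdh with hh; subst hh; exact hp
      · injection hdh with hh; subst hh; exact hp
      · injection hdh with hh; subst hh
        exact ⟨ht, e, he, rfl, fun l hl => (hpos ⟨l, hl, rfl⟩).2⟩
      · injection hdh with hh; subst hh
        have hocc : DAtom.occ d.act t ∈ M := hpos (Set.mem_insert _ _)
        have hprem : d.prem ⊆ ss t := fun l hl =>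
          (hpos (Set.mem_insert_of_mem _ ⟨l, hl, rfl⟩)).2
        obtain ⟨hacts, hPhi⟩ := htr t ht
        simp only [PhiC, Set.mem_setOf_eq] at hPhi
        have hact : d.act ∈ acts t := by rw [hacts]; exact hocc.2
        have : d.concl ∈ ss (t + 1) :=
          hPhi.2.2.1 (Or.inl ⟨d, hdyn, hact, rfl, hprem⟩)
        exact ⟨by omega, this⟩
      · injection hdh with hh; subst hh
        have hprem : sl.prem ⊆ ss t := fun l hl => (hpos ⟨l, hl, rfl⟩).2
        exact ⟨ht, (hstate t ht).2.2 sl hsl hprem⟩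
      · simp at hdh
      · injection hdh with hh; subst hh
        have hncompl : DAtom.holds l.compl (t + 1) ∉ M := fun hm =>
          Set.eq_empty_iff_forall_notMem.mp hneg _ ⟨rfl, hm⟩
        have hcm : l.compl ∉ ss (t + 1) := fun hc => hncompl ⟨by omega, hc⟩
        exact ⟨ht, complete_mem (hstate (t + 1) (by omega)).1 hcm⟩
      · simp at hdh
      · injection hdh with hh; subst hh
        have : DAtom.hpd a t ∈ M := hpos rfl
        exact ⟨ht, this⟩
      · injection hdh with hh; subst hh
        have : DAtom.obs l 0 ∈ M := hpos rfl
        exact ⟨Nat.zero_le m, hob l 0 this (Nat.zero_le m)⟩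
      · simp at hdh
    · intro c hc; exact absurd hc (Set.notMem_empty c)
  -- M satisfies the constraints
  have hsat : SatConstraints (PiDiag D S m) M := by
    intro r hr hhead
    rcases mem_normals_iff.mp hr with ⟨p, hp, rfl⟩ | ⟨p, hp, rfl⟩ |
      ⟨e, he, t, ht, rfl⟩ | ⟨d, hdyn, t, ht, rfl⟩ | ⟨sl, hsl, t, ht, rfl⟩ |
      ⟨a, t, ht, rfl⟩ | ⟨l, t, ht, rfl⟩ | ⟨f, t, ht, rfl⟩ | ⟨a, t, ht, rfl⟩ |
      ⟨l, rfl⟩ | ⟨l, t, ht, rfl⟩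
    · simp at hhead
    · simp at hhead
    · simp at hhead
    · simp at hhead
    · simp at hhead
    · rintro ⟨hpos, hneg⟩
      have hocc : DAtom.occ a t ∈ M := hpos rfl
      obtain ⟨hacts, hPhi⟩ := htr t ht
      simp only [PhiC, Set.mem_setOf_eq] at hPhi
      have hact : a ∈ acts t := by rw [hacts]; exact hocc.2
      obtain ⟨e, he, hea, hprem⟩ := hPhi.1 a hact
      have : DAtom.possible a t ∈ M := ⟨le_of_lt ht, e, he, hea, hprem⟩
      exact Set.eq_empty_iff_forall_notMem.mp hneg _ ⟨rfl, this⟩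
    · simp at hhead
    · rintro ⟨hpos, -⟩
      have h1 : DAtom.holds (Lit.pos f) t ∈ M := hpos (Set.mem_insert _ _)
      have h2 : DAtom.holds (Lit.neg f) t ∈ M := hpos (Set.mem_insert_of_mem _ rfl)
      exact (hstate t ht).2.1 f ⟨h1.2, h2.2⟩
    · simp at hhead
    · simp at hhead
    · rintro ⟨hpos, hneg⟩
      have hobs : DAtom.obs l t ∈ M := hpos rfl
      have : DAtom.holds l t ∈ M := ⟨ht, hob l t hobs ht⟩
      exact Set.eq_empty_iff_forall_notMem.mp hneg _ ⟨rfl, this⟩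
  refine ⟨M, hsat, ?_, hMM, ?_⟩
  · intro c hc; exact absurd hc (Set.notMem_empty c)
  -- minimality
  intro X hX
  have hX' := reductClosed_inter hX hMM
  set X' : Set (DAtom F A) := X ∩ M with hX'def
  suffices hMX : M ⊆ X' by exact fun x hx => (hMX hx).1
  have hfactObs : ∀ {l : Lit F} {t : ℕ}, (l, t) ∈ S.obs → DAtom.obs l t ∈ X' :=
    fun {l t} hp =>
      hX'.1 _ (ruleObsFact (p := (l, t)) hp) (Set.empty_inter M) (Set.empty_subset _) _ rfl
  have hfactHpd : ∀ {a : A} {t : ℕ}, (a, t) ∈ S.hpd → DAtom.hpd a t ∈ X' :=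
    fun {a t} hp =>
      hX'.1 _ (ruleHpdFact (p := (a, t)) hp) (Set.empty_inter M) (Set.empty_subset _) _ rfl
  have hoccX : ∀ (a : A) (t : ℕ), t < m → (a, t) ∈ S.hpd → DAtom.occ a t ∈ X' :=
    fun a t ht hp =>
      hX'.1 _ (ruleOcc a ht) (Set.empty_inter M)
        (Set.singleton_subset_iff.mpr (hfactHpd hp)) _ rfl
  have key : ∀ t, t ≤ m → ∀ l ∈ ss t, DAtom.holds l t ∈ X' := by
    intro t
    induction t with
    | zero =>
      intro _ l hl
      have hobs0 : (l, 0) ∈ S.obs := by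
        rcases l with f | f
        · rcases hcomp f with h1 | h1
          · exact h1
          · exact absurd ⟨hl, hob _ 0 h1 (Nat.zero_le m)⟩ (h0.2.1 f)
        · rcases hcomp f with h1 | h1
          · exact absurd ⟨hob _ 0 h1 (Nat.zero_le m), hl⟩ (h0.2.1 f)
          · exact h1
      exact hX'.1 _ (ruleInit l) (Set.empty_inter M)
        (Set.singleton_subset_iff.mpr (hfactObs hobs0)) _ rfl
    | succ t ih =>
      intro ht l hl
      have ht' : t < m := by omega
      have ihX := ih (by omega)
      obtain ⟨hacts, hPhi⟩ := htr t ht'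
      simp only [PhiC, Set.mem_setOf_eq] at hPhi
      obtain ⟨hexec, hst', hsub, hcons', hclos', hmin⟩ := hPhi
      have hw : ss (t + 1) ⊆ {l | DAtom.holds l (t + 1) ∈ X'} := by
        apply hmin
        · rintro l' (⟨d, hdyn, hact, rfl, hprem⟩ | ⟨h1, h2⟩)
          · have hhpd : (d.act, t) ∈ S.hpd := by rw [hacts] at hact; exact hact
            refine hX'.1 _ (ruleDyn hdyn ht') (Set.empty_inter M) ?_ _ rfl
            rw [Set.insert_subset_iff]
            exact ⟨hoccX _ _ ht' hhpd,
              holdsSetD_subset.mpr (fun l2 hl2 => ihX l2 (hprem hl2))⟩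
          · refine hX'.1 _ (ruleInertia l' ht') ?_
              (Set.singleton_subset_iff.mpr (ihX l' h1)) _ rfl
            refine Set.eq_empty_iff_forall_notMem.mpr ?_
            rintro x ⟨rfl, hxm⟩
            exact consistent_not_compl hst'.2.1 h2 hxm.2
          -- leftover goals? none
        · exact consistent_subset (fun l' hl' => (hl'.2).2) hcons'
        · intro r hr hprem
          exact hX'.1 _ (ruleStat hr ht) (Set.empty_inter M)
            (holdsSetD_subset.mpr (fun l2 hl2 => hprem hl2)) _ rfl
      exact hw hl
  intro x hx
  cases x with
  | obs l t => exact hfactObs hx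
  | hpd a t => exact hfactHpd hx
  | occ a t => exact hoccX a t hx.1 hx.2
  | possible a t =>
    obtain ⟨ht, e, he, rfl, hprem⟩ := hx
    exact hX'.1 _ (rulePoss he ht) (Set.empty_inter M)
      (holdsSetD_subset.mpr (fun l hl => key t ht l (hprem hl))) _ rfl
  | holds l t => exact key t hx.1 l hx.2
/-- Supportedness of an atom in an answer set of `PiDiag`. -/
def IsSupported (D : BDomain F A) (S : ObsSet F A) (m : ℕ) (M : Set (DAtom F A)) :
    DAtom F A → Prop
  | DAtom.obs l t => (l, t) ∈ S.obs
  | DAtom.hpd a t => (a, t) ∈ S.hpd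
  | DAtom.occ a t => t < m ∧ (a, t) ∈ S.hpd
  | DAtom.possible a t =>
      ∃ e ∈ D.execs, e.act = a ∧ ∀ l ∈ e.prem, DAtom.holds l t ∈ M
  | DAtom.holds _ _ => True

theorem model_of_answerSet (D : BDomain F A) (S : ObsSet F A) (m : ℕ)
    (hcomp : ∀ f : F, (Lit.pos f, 0) ∈ S.obs ∨ (Lit.neg f, 0) ∈ S.obs)
    (M : Set (DAtom F A)) (hM : AnswerSet (PiDiag D S m) M) :
    HasModel D S m := by
  obtain ⟨hCon, -, hRC, hMin⟩ := hM
  set ss : ℕ → Set (Lit F) := fun t => {l | DAtom.holds l t ∈ M} with hssdef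
  set acts : ℕ → Set A := fun t => {a | (a, t) ∈ S.hpd} with hactsdef
  have hobsM : ∀ {l : Lit F} {t : ℕ}, (l, t) ∈ S.obs → DAtom.obs l t ∈ M :=
    fun {l t} hp => hRC.1 _ (ruleObsFact (p := (l, t)) hp) (Set.empty_inter M)
      (Set.empty_subset _) _ rfl
  have hhpdM : ∀ {a : A} {t : ℕ}, (a, t) ∈ S.hpd → DAtom.hpd a t ∈ M :=
    fun {a t} hp => hRC.1 _ (ruleHpdFact (p := (a, t)) hp) (Set.empty_inter M)
      (Set.empty_subset _) _ rfl
  have hoccM : ∀ (a : A) (t : ℕ), t < m → (a, t) ∈ S.hpd → DAtom.occ a t ∈ M :=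
    fun a t ht hp => hRC.1 _ (ruleOcc a ht) (Set.empty_inter M)
      (Set.singleton_subset_iff.mpr (hhpdM hp)) _ rfl
  -- every atom in M is supported
  have hsupp : ∀ x ∈ M, IsSupported D S m M x := by
    have hXc : ReductClosed (PiDiag D S m) M {x ∈ M | IsSupported D S m M x} := by
      constructor
      · intro r hr hneg hpos hd hdh
        have hposM : r.pos ⊆ M := hpos.trans (Set.sep_subset _ _)
        have hdM : hd ∈ M := hRC.1 r hr hneg hposM hd hdh
        refine ⟨hdM, ?_⟩
        rcases mem_normals_iff.mp hr with ⟨p, hp, rfl⟩ | ⟨p, hp, rfl⟩ |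
          ⟨e, he, t0, ht0, rfl⟩ | ⟨d, hdyn, t0, ht0, rfl⟩ | ⟨sl, hsl, t0, ht0, rfl⟩ |
          ⟨a, t0, ht0, rfl⟩ | ⟨l, t0, ht0, rfl⟩ | ⟨f, t0, ht0, rfl⟩ |
          ⟨a, t0, ht0, rfl⟩ | ⟨l, rfl⟩ | ⟨l, t0, ht0, rfl⟩
        · injection hdh with hh; subst hh; exact hp
        · injection hdh with hh; subst hh; exact hp
        · injection hdh with hh; subst hh
          exact ⟨e, he, rfl, fun l hl => hposM ⟨l, hl, rfl⟩⟩
        · injection hdh with hh; subst hh; trivial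
        · injection hdh with hh; subst hh; trivial
        · simp at hdh
        · injection hdh with hh; subst hh; trivial
        · simp at hdh
        · injection hdh with hh; subst hh
          exact ⟨ht0, (hpos rfl).2⟩
        · injection hdh with hh; subst hh; trivial
        · simp at hdh
      · intro c hc; exact absurd hc (Set.notMem_empty c)
    intro x hx
    exact (hMin _ hXc hx).2
  have hoccSup : ∀ {a : A} {t : ℕ}, DAtom.occ a t ∈ M → t < m ∧ (a, t) ∈ S.hpd :=
    fun {a t} h => hsupp _ h
  have hposSup : ∀ {a : A} {t : ℕ}, DAtom.possible a t ∈ M →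
      ∃ e ∈ D.execs, e.act = a ∧ e.prem ⊆ ss t := by
    intro a t h
    obtain ⟨e, he, hea, hp⟩ := hsupp _ h
    exact ⟨e, he, hea, fun l hl => hp l hl⟩
  -- states
  have hcons : ∀ t ≤ m, ConsistentLits (ss t) := by
    intro t ht f hf
    refine hCon _ (ruleConFl f ht) rfl ⟨?_, Set.empty_inter M⟩
    rw [Set.insert_subset_iff, Set.singleton_subset_iff]
    exact ⟨hf.1, hf.2⟩
  have hclos : ∀ t ≤ m, ClosedUnder D.statics (ss t) := by
    intro t ht r hr hprem
    exact hRC.1 _ (ruleStat hr ht) (Set.empty_inter M)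
      (holdsSetD_subset.mpr (fun l hl => hprem hl)) _ rfl
  have hinit0 : ∀ l : Lit F, (l, 0) ∈ S.obs → l ∈ ss 0 := fun l hl =>
    hRC.1 _ (ruleInit l) (Set.empty_inter M)
      (Set.singleton_subset_iff.mpr (hobsM hl)) _ rfl
  have hcompS : ∀ t ≤ m, CompleteLits (ss t) := by
    intro t
    induction t with
    | zero =>
      intro _ f
      rcases hcomp f with h1 | h1
      · exact Or.inl (hinit0 _ h1)
      · exact Or.inr (hinit0 _ h1)
    | succ t ih =>
      intro ht f
      have ht' : t < m := by omega
      by_cases hn : Lit.neg f ∈ ss (t + 1)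
      · exact Or.inr hn
      by_cases hp : Lit.pos f ∈ ss (t + 1)
      · exact Or.inl hp
      exfalso
      rcases ih (by omega) f with h1 | h1
      · apply hp
        refine hRC.1 _ (ruleInertia (Lit.pos f) ht') ?_
          (Set.singleton_subset_iff.mpr h1) _ rfl
        refine Set.eq_empty_iff_forall_notMem.mpr ?_
        rintro x ⟨rfl, hxm⟩
        exact hn hxm
      · apply hn
        refine hRC.1 _ (ruleInertia (Lit.neg f) ht') ?_
          (Set.singleton_subset_iff.mpr h1) _ rfl
        refine Set.eq_empty_iff_forall_notMem.mpr ?_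
        rintro x ⟨rfl, hxm⟩
        exact hp hxm
  have hstate : ∀ t ≤ m, IsState D (ss t) :=
    fun t ht => ⟨hcompS t ht, hcons t ht, hclos t ht⟩
  have hobsHold : ∀ (l : Lit F) (t : ℕ), (l, t) ∈ S.obs → t ≤ m → l ∈ ss t := by
    intro l t hl ht
    by_contra hnot
    refine hCon _ (ruleReal l ht) rfl
      ⟨Set.singleton_subset_iff.mpr (hobsM hl), ?_⟩
    refine Set.eq_empty_iff_forall_notMem.mpr ?_
    rintro x ⟨rfl, hxm⟩
    exact hnot hxm
  refine ⟨ss, acts, hstate 0 (Nat.zero_le m), ?_, fun l t hl ht => hobsHold l t hl ht⟩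
  intro t ht
  refine ⟨rfl, ?_⟩
  simp only [PhiC, Set.mem_setOf_eq]
  have hoccM' : ∀ a ∈ acts t, DAtom.occ a t ∈ M := fun a ha => hoccM a t ht ha
  refine ⟨?_, hstate (t + 1) (by omega), ?_,
    hcons (t + 1) (by omega), hclos (t + 1) (by omega), ?_⟩
  · -- executability
    intro a ha
    have hocc := hoccM' a ha
    have hposs : DAtom.possible a t ∈ M := by
      by_contra hnp
      refine hCon _ (ruleConOcc a ht) rfl ⟨Set.singleton_subset_iff.mpr hocc, ?_⟩
      refine Set.eq_empty_iff_forall_notMem.mpr ?_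
      rintro x ⟨rfl, hxm⟩
      exact hnp hxm
    exact hposSup hposs
  · -- direct effects and inertia are in `ss (t+1)`
    rintro l (⟨d, hdyn, hact, rfl, hprem⟩ | ⟨-, h2⟩)
    · refine hRC.1 _ (ruleDyn hdyn ht) (Set.empty_inter M) ?_ _ rfl
      rw [Set.insert_subset_iff]
      exact ⟨hoccM' d.act hact, holdsSetD_subset.mpr (fun l2 hl2 => hprem hl2)⟩
    · exact h2
  · -- minimality of `ss (t+1)`
    intro w hw hwc hwcl
    have hXc : ReductClosed (PiDiag D S m) M
        {x ∈ M | ∀ l : Lit F, x = DAtom.holds l (t + 1) → l ∈ w} := by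
      constructor
      · intro r hr hneg hpos hd hdh
        have hposM : r.pos ⊆ M := hpos.trans (Set.sep_subset _ _)
        have hdM : hd ∈ M := hRC.1 r hr hneg hposM hd hdh
        refine ⟨hdM, ?_⟩
        rcases mem_normals_iff.mp hr with ⟨p, hp, rfl⟩ | ⟨p, hp, rfl⟩ |
          ⟨e, he, t0, ht0, rfl⟩ | ⟨d, hdyn, t0, ht0, rfl⟩ | ⟨sl, hsl, t0, ht0, rfl⟩ |
          ⟨a, t0, ht0, rfl⟩ | ⟨l0, t0, ht0, rfl⟩ | ⟨f, t0, ht0, rfl⟩ |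
          ⟨a, t0, ht0, rfl⟩ | ⟨l0, rfl⟩ | ⟨l0, t0, ht0, rfl⟩
        · injection hdh with hh; subst hh; intro l' h; simp at h
        · injection hdh with hh; subst hh; intro l' h; simp at h
        · injection hdh with hh; subst hh; intro l' h; simp at h
        · -- dynamic law
          injection hdh with hh; subst hh
          intro l' h
          injection h with h1 h2
          have ht0t : t0 = t := by omega
          subst ht0t
          subst h1
          have hocc : DAtom.occ d.act t0 ∈ M := (hpos (Set.mem_insert _ _)).1
          have hact : d.act ∈ acts t0 := (hoccSup hocc).2
          have hprem : d.prem ⊆ ss t0 := fun l2 hl2 =>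
            (hpos (Set.mem_insert_of_mem _ ⟨l2, hl2, rfl⟩)).1
          exact hw (Or.inl ⟨d, hdyn, hact, rfl, hprem⟩)
        · -- static law
          injection hdh with hh; subst hh
          intro l' h
          injection h with h1 h2
          subst h2
          subst h1
          exact hwcl sl hsl (fun l2 hl2 => (hpos ⟨l2, hl2, rfl⟩).2 l2 rfl)
        · simp at hdh
        · -- inertia
          injection hdh with hh; subst hh
          intro l' h
          injection h with h1 h2
          have ht0t : t0 = t := by omega
          subst ht0t
          subst h1
          have hncompl : l0.compl ∉ ss (t0 + 1) := by
            intro hc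
            exact Set.eq_empty_iff_forall_notMem.mp hneg _ ⟨rfl, hc⟩
          have hl0t : l0 ∈ ss t0 := (hpos rfl).1
          have hl0t1 : l0 ∈ ss (t0 + 1) :=
            complete_mem (hcompS (t0 + 1) (by omega)) hncompl
          exact hw (Or.inr ⟨hl0t, hl0t1⟩)
        · simp at hdh
        · injection hdh with hh; subst hh; intro l' h; simp at h
        · -- initial
          injection hdh with hh; subst hh
          intro l' h
          injection h with h1 h2
          exact absurd h2 (by omega)
        · simp at hdh
      · intro c hc; exact absurd hc (Set.notMem_empty c)
    intro l hl
    exact (hMin _ hXc hl).2 l rfl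
end SymptomAux

/-- **Symptom detection**: a configuration `⟨H_n,O^m_n⟩` (with `H_n` consistent and
with complete initial situation) is a symptom iff `TEST(S) = Π(D,H_n) ∪ O^m_n`
has no answer set. -/
theorem symptom_iff_no_answer_set {F A : Type}
    (D : BDomain F A) (hdc : ConsistentTheoryC D)
    (H O : ObsSet F A) (n m : ℕ) (hnm : n ≤ m)
    (hH : H.UpTo n) (hO : O.Between n m)
    (hcomplete : ∀ f : F, (Lit.pos f, 0) ∈ H.obs ∨ (Lit.neg f, 0) ∈ H.obs)
    (hHcons : HasModel D H n) :
    IsSymptom D H O n m ↔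
      ¬ ∃ X : Set (DAtom F A), AnswerSet (PiDiag D (H.union O) m) X := by
  have hSobs : ∀ f : F,
      (Lit.pos f, 0) ∈ (H.union O).obs ∨ (Lit.neg f, 0) ∈ (H.union O).obs :=
    fun f => (hcomplete f).imp Or.inl Or.inl
  constructor
  · rintro ⟨-, hno⟩ ⟨X, hX⟩
    exact hno (SymptomAux.model_of_answerSet D (H.union O) m hSobs X hX)
  · intro hno
    exact ⟨hHcons, fun hm =>
      hno (SymptomAux.answerSet_of_model D (H.union O) m hSobs hm)⟩
end

section
/- Let D be a consistent domain in action language B with transition function Φ, and let Φ^a be a sound approximation of Φ. Then for every action sequence α and every partial state δ, if Φ̂^a(α,δ) is defined and equals δ', then for every state s ∈ comp(δ): Φ̂(α,s) ≠ ∅ and δ' ⊆ s' for every s' ∈ Φ̂(α,s). -/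
/-- The extension `Φ̂` of `Φ` to action sequences: `Φ̂(⟨⟩,s) = {s}` and
`Φ̂(a::α, s) = ⋃_{s' ∈ Φ(a,s)} Φ̂(α,s')` when `Φ(a,s) ≠ ∅` and all recursive values
are nonempty, and `∅` otherwise. -/
def PhiHat {F A : Type} (D : BDomain F A) : List A → Set (Lit F) → Set (Set (Lit F))
  | [], s => {s}
  | a :: rest, s =>
      { s'' | ((Phi D a s).Nonempty ∧
                ∀ s' ∈ Phi D a s, (PhiHat D rest s').Nonempty) ∧
              ∃ s' ∈ Phi D a s, s'' ∈ PhiHat D rest s' }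

/-- The domain `D` is consistent: `Φ(a,s) ≠ ∅` whenever `a` is executable in the
state `s`. -/
def ConsistentDomain {F A : Type} (D : BDomain F A) : Prop :=
  ∀ (a : A) (s : Set (Lit F)), IsState D s → Executable D a s → (Phi D a s).Nonempty

/-- `δ` is a partial state of `D`: a consistent set of literals contained in
some state. -/
def IsPartialState {F A : Type} (D : BDomain F A) (δ : Set (Lit F)) : Prop :=
  ConsistentLits δ ∧ ∃ s, IsState D s ∧ δ ⊆ s

/-- The completion `comp(δ)`: the set of states containing `δ`. -/
def comp {F A : Type} (D : BDomain F A) (δ : Set (Lit F)) : Set (Set (Lit F)) :=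
  { s | IsState D s ∧ δ ⊆ s }

/-- `Φ^a` is a sound approximation of `Φ`: whenever `Φ^a(a,δ) = δ'` is defined and
`s ∈ comp(δ)`, `a` is executable in `s` and `δ' ⊆ s'` for every `s' ∈ Φ(a,s)`. -/
def SoundApprox {F A : Type} (D : BDomain F A)
    (Phia : A → Set (Lit F) → Option (Set (Lit F))) : Prop :=
  ∀ (a : A) (δ δ' : Set (Lit F)), Phia a δ = some δ' →
    ∀ s ∈ comp D δ, Executable D a s ∧ ∀ s' ∈ Phi D a s, δ' ⊆ s'

/-- The extension `Φ̂^a` of a (partial) approximation to action sequences; it is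
defined only when every intermediate value is defined. -/
def PhiaHat {F A : Type} (Phia : A → Set (Lit F) → Option (Set (Lit F))) :
    List A → Set (Lit F) → Option (Set (Lit F))
  | [], δ => some δ
  | a :: rest, δ => (Phia a δ).bind (PhiaHat Phia rest)

section Soundness

variable {F A : Type} {D : BDomain F A}

theorem PhiHat_cons_eq_biUnion {a : A} {rest : List A} {s : Set (Lit F)}
    (hne : (Phi D a s).Nonempty) (hrest : ∀ s' ∈ Phi D a s, (PhiHat D rest s').Nonempty) :
    PhiHat D (a :: rest) s = ⋃ s' ∈ Phi D a s, PhiHat D rest s' := by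
  ext t
  simp only [PhiHat, Set.mem_ofPred_eq, Set.mem_iUnion, exists_prop]
  exact and_iff_right ⟨hne, hrest⟩

theorem SoundApprox.Phi_nonempty_and_subset_comp {Phia : A → Set (Lit F) → Option (Set (Lit F))}
    (hD : ConsistentDomain D) (hsound : SoundApprox D Phia) {a : A} {δ δ₁ s : Set (Lit F)}
    (hstep : Phia a δ = some δ₁) (hs : s ∈ comp D δ) :
    (Phi D a s).Nonempty ∧ Phi D a s ⊆ comp D δ₁ := by
  obtain ⟨hexec, hsub⟩ := hsound a δ δ₁ hstep s hs
  exact ⟨hD a s hs.1 hexec, fun s' hs' => ⟨hs'.2.1, hsub s' hs'⟩⟩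

end Soundness

theorem approx_hat_sound_general {F A : Type}
    (D : BDomain F A) (hD : ConsistentDomain D)
    (Phia : A → Set (Lit F) → Option (Set (Lit F)))
    (hsound : SoundApprox D Phia)
    (α : List A) (δ δ' : Set (Lit F))
    (hdef : PhiaHat Phia α δ = some δ') :
    ∀ s ∈ comp D δ, (PhiHat D α s).Nonempty ∧ ∀ s' ∈ PhiHat D α s, δ' ⊆ s' := by
  induction α generalizing δ with
  | nil =>
    intro s hs
    obtain rfl : δ = δ' := Option.some.inj hdef
    exact ⟨Set.singleton_nonempty s, fun s' hs' => hs' ▸ hs.2⟩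
  | cons a rest ih =>
    intro s hs
    obtain ⟨δ₁, hstep, hrest⟩ := Option.bind_eq_some_iff.mp hdef
    obtain ⟨hne, hcomp⟩ := hsound.Phi_nonempty_and_subset_comp hD hstep hs
    have ih_branch := fun s' (hs' : s' ∈ Phi D a s) => ih δ₁ hrest s' (hcomp hs')
    rw [PhiHat_cons_eq_biUnion hne fun s' hs' => (ih_branch s' hs').1]
    refine ⟨Set.nonempty_biUnion.mpr ?_, ?_⟩
    · obtain ⟨s₁, hs₁⟩ := hne
      exact ⟨s₁, hs₁, (ih_branch s₁ hs₁).1⟩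
    · simp only [Set.mem_iUnion]
      rintro s'' ⟨s', hs', hs''⟩
      exact (ih_branch s' hs').2 s'' hs''

/-- **Soundness of `Φ̂^a`**: if `Φ̂^a(α,δ)` is defined and equals `δ'`, then for
every state `s ∈ comp(δ)`, `Φ̂(α,s) ≠ ∅` and `δ' ⊆ s'` for every `s' ∈ Φ̂(α,s)`. -/
theorem approx_hat_sound {F A : Type}
    (D : BDomain F A) (hD : ConsistentDomain D)
    (Phia : A → Set (Lit F) → Option (Set (Lit F)))
    (hsound : SoundApprox D Phia)
    (α : List A) (δ δ' : Set (Lit F)) (hδ : IsPartialState D δ)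
    (hdef : PhiaHat Phia α δ = some δ') :
    ∀ s ∈ comp D δ, (PhiHat D α s).Nonempty ∧ ∀ s' ∈ PhiHat D α s, δ' ⊆ s' :=
  approx_hat_sound_general D hD Phia hsound α δ δ' hdef
end

section
/- Let D be a consistent domain in action language B with transition function Φ, let Φ^a be a sound approximation of Φ, and let P = ⟨D,δ0,Δ⟩ be a conformant planning problem with δ0 a partial state and Δ a set of fluent literals. If α is an action sequence such that Φ̂^a(α,δ0) is defined and Δ ⊆ Φ̂^a(α,δ0), then α is a secure (conformant) plan for P: for every s0 ∈ comp(δ0), Φ̂(α,s0) ≠ ∅ and Δ ⊆ s for every s ∈ Φ̂(α,s0). -/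
/-- A conformant planning problem `⟨D,δ0,Δ⟩` and the notion of secure plan:
`α` is a secure (conformant) plan if for every `s0 ∈ comp(δ0)`, `Φ̂(α,s0) ≠ ∅`
and `Δ` holds in every state of `Φ̂(α,s0)`. -/
def SecurePlan {F A : Type} (D : BDomain F A) (δ0 Δ : Set (Lit F)) (α : List A) : Prop :=
  ∀ s0 ∈ comp D δ0, (PhiHat D α s0).Nonempty ∧ ∀ s ∈ PhiHat D α s0, Δ ⊆ s

theorem PhiHat.nonempty_and_subset_cons {F A : Type} {D : BDomain F A} {a : A} {rest : List A}
    {s δ : Set (Lit F)} (hne : (Phi D a s).Nonempty)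
    (hsucc : ∀ s' ∈ Phi D a s, (PhiHat D rest s').Nonempty ∧ ∀ t ∈ PhiHat D rest s', δ ⊆ t) :
    (PhiHat D (a :: rest) s).Nonempty ∧ ∀ t ∈ PhiHat D (a :: rest) s, δ ⊆ t := by
  constructor
  · have ⟨s₁, hs₁⟩ := hne
    obtain ⟨t, ht⟩ := (hsucc s₁ hs₁).1
    exact ⟨t, ⟨hne, fun s' hs' => (hsucc s' hs').1⟩, s₁, hs₁, ht⟩
  · rintro t ⟨-, s', hs', ht⟩
    exact (hsucc s' hs').2 t ht

theorem SecurePlan.mono {F A : Type} {D : BDomain F A} {δ Δ Δ' : Set (Lit F)} {α : List A}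
    (h : SecurePlan D δ Δ' α) (hΔ : Δ ⊆ Δ') : SecurePlan D δ Δ α :=
  fun s hs => ⟨(h s hs).1, fun t ht => hΔ.trans ((h s hs).2 t ht)⟩

namespace SoundApprox

variable {F A : Type} {D : BDomain F A} {Phia : A → Set (Lit F) → Option (Set (Lit F))}

theorem phi_nonempty (hsound : SoundApprox D Phia) (hD : ConsistentDomain D) {a : A}
    {δ δ' s : Set (Lit F)} (ha : Phia a δ = some δ') (hs : s ∈ comp D δ) :
    (Phi D a s).Nonempty :=
  hD a s hs.1 (hsound a δ δ' ha s hs).1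

theorem phi_subset_comp (hsound : SoundApprox D Phia) {a : A} {δ δ' s : Set (Lit F)}
    (ha : Phia a δ = some δ') (hs : s ∈ comp D δ) : Phi D a s ⊆ comp D δ' :=
  fun s' hs' => ⟨hs'.2.1, (hsound a δ δ' ha s hs).2 s' hs'⟩

theorem securePlan_phiaHat (hsound : SoundApprox D Phia) (hD : ConsistentDomain D) :
    ∀ (α : List A) {δ δ' : Set (Lit F)}, PhiaHat Phia α δ = some δ' → SecurePlan D δ δ' α
  | [], δ, δ', hdef => by
    obtain rfl : δ = δ' := Option.some.inj hdef
    exact fun s hs => ⟨⟨s, rfl⟩, fun t ht => ht ▸ hs.2⟩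
  | a :: rest, δ, δ', hdef => by
    obtain ⟨δ₁, ha, hrest⟩ := Option.bind_eq_some_iff.mp hdef
    intro s hs
    exact PhiHat.nonempty_and_subset_cons (hsound.phi_nonempty hD ha hs)
      fun s' hs' => securePlan_phiaHat hsound hD rest hrest s' (hsound.phi_subset_comp ha hs hs')

end SoundApprox

theorem approx_conformant_planning_general {F A : Type}
    (D : BDomain F A) (hD : ConsistentDomain D)
    (Phia : A → Set (Lit F) → Option (Set (Lit F)))
    (hsound : SoundApprox D Phia)
    (δ0 Δ : Set (Lit F))
    (α : List A) (δ' : Set (Lit F))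
    (hdef : PhiaHat Phia α δ0 = some δ') (hgoal : Δ ⊆ δ') :
    SecurePlan D δ0 Δ α :=
  (hsound.securePlan_phiaHat hD α hdef).mono hgoal

/-- **Conformant planning with a sound approximation**: if `Φ̂^a(α,δ0)` is defined
and the goal `Δ` holds in it, then `α` is a secure (conformant) plan for
`⟨D,δ0,Δ⟩`. -/
theorem approx_conformant_planning {F A : Type}
    (D : BDomain F A) (hD : ConsistentDomain D)
    (Phia : A → Set (Lit F) → Option (Set (Lit F)))
    (hsound : SoundApprox D Phia)
    (δ0 Δ : Set (Lit F)) (hδ0 : IsPartialState D δ0)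
    (α : List A) (δ' : Set (Lit F))
    (hdef : PhiaHat Phia α δ0 = some δ') (hgoal : Δ ⊆ δ') :
    SecurePlan D δ0 Δ α :=
  approx_conformant_planning_general D hD Phia hsound δ0 Δ α δ' hdef hgoal
end
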